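/- arXiv:2603.29702 — 5 statements merged into one kernel-verified Lean document; each statement's English description precedes it below -/
import Mathlib

section
/- Let M be a positive even integer and let B = (b_1, …, b_M) be a sequence of real numbers. Then there exists a vector γ ∈ {−1, +1}^M having exactly M/2 coordinates equal to +1 such that 2·∑_{i=1}^{M} b_i·γ_i ≥ md_M(B). -/
attribute [local instance] Classical.propDecidable

/-- For a sequence `B` of `M` reals (`M` positive and even), there is a
sign vector `γ ∈ {−1,+1}^M` with exactly `M/2` coordinates equal to `+1` such that
`2 · ∑ i, B i · γ i ≥ md_M(B)`, where `md_M(B) = ∑ i, |B i − (∑ j, B j)/M|`. -/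
theorem stmt0 (M : ℕ) (hM : 0 < M) (hEven : Even M) (B : Fin M → ℝ) :
    ∃ γ : Fin M → ℝ, (∀ i, γ i = 1 ∨ γ i = -1) ∧
      (Finset.univ.filter fun i => γ i = 1).card = M / 2 ∧
      ∑ i, |B i - (∑ j, B j) / M| ≤ 2 * ∑ i, B i * γ i := by
  obtain ⟨k, rfl⟩ := hEven
  have hk : 0 < k := by omega
  set m : ℝ := (∑ j, B j) / ((k + k : ℕ) : ℝ) with hm
  set c : Fin (k + k) → ℝ := fun i => B i - m with hc
  have hci : ∀ i, B i - m = c i := fun _ => rfl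
  set σ : Equiv.Perm (Fin (k + k)) := Tuple.sort c with hσ
  have hmono : Monotone (c ∘ σ) := Tuple.monotone_sort c
  set d : Fin (k + k) → ℝ := c ∘ σ with hd
  set a : Fin k → ℝ := fun j => d (Fin.castAdd k j) with ha
  set e : Fin k → ℝ := fun j => d (Fin.natAdd k j) with he
  set t : ℝ := d (Fin.natAdd k ⟨0, hk⟩) with ht
  have hat : ∀ j, a j ≤ t := by
    intro j
    apply hmono
    rw [Fin.le_def]
    simp only [Fin.coe_castAdd, Fin.coe_natAdd]
    omega
  have hte : ∀ j, t ≤ e j := by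
    intro j
    apply hmono
    rw [Fin.le_def]
    simp only [Fin.coe_natAdd]
    omega
  have hcsum : ∑ i, c i = 0 := by
    have hMne : ((k + k : ℕ) : ℝ) ≠ 0 := by positivity
    simp only [hc, Finset.sum_sub_distrib, Finset.sum_const, Finset.card_univ,
      Fintype.card_fin, nsmul_eq_mul, hm]
    field_simp
    ring
  have hdsum : (∑ j, a j) + (∑ j, e j) = 0 := by
    have h1 : ∑ i, c (σ i) = ∑ i, c i := Equiv.sum_comp σ c
    rw [hcsum, Fin.sum_univ_add] at h1
    exact h1
  set γ : Fin (k + k) → ℝ :=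
    fun i => if k ≤ ((σ.symm i : Fin (k + k)) : ℕ) then (1 : ℝ) else -1 with hγ
  have hγσ1 : ∀ j : Fin k, γ (σ (Fin.natAdd k j)) = 1 := by
    intro j
    simp only [hγ, Equiv.symm_apply_apply, Fin.coe_natAdd]
    rw [if_pos (by omega)]
  have hγσ2 : ∀ j : Fin k, γ (σ (Fin.castAdd k j)) = -1 := by
    intro j
    simp only [hγ, Equiv.symm_apply_apply, Fin.coe_castAdd]
    rw [if_neg (by omega)]
  refine ⟨γ, ?_, ?_, ?_⟩
  · intro i
    by_cases h : k ≤ ((σ.symm i : Fin (k + k)) : ℕ)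
    · left; simp [hγ, h]
    · right; simp [hγ, h]
  · have h1 : (Finset.univ.filter fun i => γ i = 1).card
        = (Finset.univ.filter fun j : Fin (k + k) => k ≤ (j : ℕ)).card := by
      apply Finset.card_equiv σ.symm
      intro i
      simp only [Finset.mem_filter, Finset.mem_univ, true_and, hγ]
      constructor
      · intro h
        by_contra hx
        rw [if_neg hx] at h
        norm_num at h
      · intro h
        rw [if_pos h]
    rw [h1, Finset.card_filter, Fin.sum_univ_add]
    simp only [Fin.coe_castAdd, Fin.coe_natAdd]
    have h2 : ∀ j : Fin k, (if k ≤ (j : ℕ) then 1 else 0) = 0 := by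
      intro j; rw [if_neg (by omega)]
    have h3 : ∀ j : Fin k, (if k ≤ k + (j : ℕ) then 1 else 0) = 1 := by
      intro j; rw [if_pos (by omega)]
    simp only [h2, h3, Finset.sum_const, Finset.card_univ, Fintype.card_fin,
      smul_eq_mul, mul_one, mul_zero, Finset.sum_const_zero, zero_add]
    omega
  · -- main inequality
    have hγsum : ∑ i, γ i = 0 := by
      rw [← Equiv.sum_comp σ γ, Fin.sum_univ_add]
      simp only [hγσ1, hγσ2]
      simp [Finset.sum_const]
    have hsplit : ∑ i, B i * γ i = ∑ i, c i * γ i + m * ∑ i, γ i := by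
      rw [Finset.mul_sum, ← Finset.sum_add_distrib]
      apply Finset.sum_congr rfl
      intro i _
      simp only [hc]
      ring
    have hsum1 : ∑ i, c i * γ i = (∑ j, e j) - (∑ j, a j) := by
      rw [← Equiv.sum_comp σ (fun i => c i * γ i), Fin.sum_univ_add]
      simp only [hγσ1, hγσ2, mul_neg_one, mul_one]
      have hca : ∀ j : Fin k, c (σ (Fin.castAdd k j)) = a j := fun _ => rfl
      have hce : ∀ j : Fin k, c (σ (Fin.natAdd k j)) = e j := fun _ => rfl
      simp only [hca, hce, Finset.sum_neg_distrib]
      ring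
    have habs : ∑ i, |B i - (∑ j, B j) / ((k + k : ℕ) : ℝ)|
        = (∑ j, |a j|) + (∑ j, |e j|) := by
      simp only [← hm, hci]
      rw [← Equiv.sum_comp σ (fun i => |c i|), Fin.sum_univ_add]
      rfl
    have hb1 : ∑ j, |a j| ≤ (k : ℝ) * t - (∑ j, a j) + (k : ℝ) * |t| := by
      have : ∑ j, |a j| ≤ ∑ j : Fin k, ((t - a j) + |t|) := by
        apply Finset.sum_le_sum
        intro j _
        calc |a j| = |(a j - t) + t| := by ring_nf
          _ ≤ |a j - t| + |t| := abs_add_le _ _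
          _ = (t - a j) + |t| := by rw [abs_of_nonpos (by linarith [hat j])]; ring
      calc ∑ j, |a j| ≤ ∑ j : Fin k, ((t - a j) + |t|) := this
        _ = (k : ℝ) * t - (∑ j, a j) + (k : ℝ) * |t| := by
          rw [Finset.sum_add_distrib, Finset.sum_sub_distrib]
          simp [Finset.sum_const, Finset.card_univ, mul_comm]
    have hb2 : ∑ j, |e j| ≤ (∑ j, e j) - (k : ℝ) * t + (k : ℝ) * |t| := by
      have : ∑ j, |e j| ≤ ∑ j : Fin k, ((e j - t) + |t|) := by
        apply Finset.sum_le_sum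
        intro j _
        calc |e j| = |(e j - t) + t| := by ring_nf
          _ ≤ |e j - t| + |t| := abs_add_le _ _
          _ = (e j - t) + |t| := by rw [abs_of_nonneg (by linarith [hte j])]
      calc ∑ j, |e j| ≤ ∑ j : Fin k, ((e j - t) + |t|) := this
        _ = (∑ j, e j) - (k : ℝ) * t + (k : ℝ) * |t| := by
          rw [Finset.sum_add_distrib, Finset.sum_sub_distrib]
          simp [Finset.sum_const, Finset.card_univ, mul_comm]
    have hk1 : (k : ℝ) * |t| ≤ ∑ j, e j := by
      rcases le_or_gt 0 t with h | h
      · rw [abs_of_nonneg h]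
        calc (k : ℝ) * t = ∑ _j : Fin k, t := by
              simp [Finset.sum_const, Finset.card_univ, mul_comm]
          _ ≤ ∑ j, e j := Finset.sum_le_sum fun j _ => hte j
      · rw [abs_of_neg h]
        have : ∑ j, a j ≤ ∑ _j : Fin k, t := Finset.sum_le_sum fun j _ => hat j
        simp only [Finset.sum_const, Finset.card_univ, Fintype.card_fin,
          smul_eq_mul, nsmul_eq_mul] at this
        linarith
    have hk2 : (k : ℝ) * |t| ≤ -(∑ j, a j) := by
      rcases le_or_gt 0 t with h | h
      · rw [abs_of_nonneg h]
        have : (k : ℝ) * t ≤ ∑ j, e j := by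
          calc (k : ℝ) * t = ∑ _j : Fin k, t := by
                simp [Finset.sum_const, Finset.card_univ, mul_comm]
            _ ≤ ∑ j, e j := Finset.sum_le_sum fun j _ => hte j
        linarith
      · rw [abs_of_neg h]
        have : ∑ j, a j ≤ ∑ _j : Fin k, t := Finset.sum_le_sum fun j _ => hat j
        simp only [Finset.sum_const, Finset.card_univ, Fintype.card_fin,
          smul_eq_mul, nsmul_eq_mul] at this
        linarith
    rw [habs, hsplit, hγsum, hsum1, mul_zero, add_zero]
    linarith
end

section
/- There exists an absolute constant C > 0 such that for every even integer M ≥ 2, every integer S ≥ 1, n = M^S, and every real sequence A = (a_1, …, a_n), the tree total deviation satisfies treemd_{M,S}(A) ≤ C·( (∑_{x=1}^{n} |a_x|)·S^{51/100} + (max_{x} |a_x|)·n·2^{−S^{3/200}} ). -/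
/-- Sum of the sequence `A` over the interval of indices `(l, r] = {l+1, …, r}`. -/
noncomputable def iSum (A : ℕ → ℝ) (l r : ℕ) : ℝ := ∑ x ∈ Finset.Ioc l r, A x

/-- Total deviation `md_M` of the scale-`s` interval `(l, l + M^s]` of the sequence `A`:
the anchors are `m_i = l + i·M^(s−1)` and
`md = ∑_{i=1}^{M} |A_Σ(m_{i−1}, m_i] − (1/M)·A_Σ(l, l+M^s]|`. -/
noncomputable def mdAt (M s l : ℕ) (A : ℕ → ℝ) : ℝ :=
  ∑ i ∈ Finset.range M,
    |iSum A (l + i * M ^ (s - 1)) (l + (i + 1) * M ^ (s - 1)) -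
      (1 / (M : ℝ)) * iSum A l (l + M ^ s)|

/-- Tree total deviation `treemd_{M,S}` of the sequence `A` (indexed by `{1, …, M^S}`):
the sum of `md_M` over all scale-`s` intervals `(k·M^s, (k+1)·M^s]`, over all scales
`s ∈ {1, …, S}`. -/
noncomputable def treemd (M S : ℕ) (A : ℕ → ℝ) : ℝ :=
  ∑ s ∈ Finset.Icc 1 S, ∑ k ∈ Finset.range (M ^ (S - s)), mdAt M s (k * M ^ s) A

namespace Stmt2Aux
open Finset

/-- block sum at scale `u`, block index `j` -/
noncomputable def bs (M : ℕ) (A : ℕ → ℝ) (u j : ℕ) : ℝ :=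
  iSum A (j * M ^ u) ((j + 1) * M ^ u)

/-- block average -/
noncomputable def av (M : ℕ) (A : ℕ → ℝ) (u j : ℕ) : ℝ := bs M A u j / (M : ℝ) ^ u

lemma sum_Ioc_blocks (f : ℕ → ℝ) (l w : ℕ) (q : ℕ) :
    ∑ k ∈ range q, (∑ x ∈ Ioc (l + k * w) (l + (k + 1) * w), f x)
      = ∑ x ∈ Ioc l (l + q * w), f x := by
  induction q with
  | zero => simp
  | succ n ih =>
      rw [Finset.sum_range_succ, ih]
      have h1 : l ≤ l + n * w := Nat.le_add_right _ _
      have h2 : l + n * w ≤ l + (n + 1) * w := by nlinarith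
      exact Finset.sum_Ioc_consecutive f h1 h2



lemma sum_range_mul' (g : ℕ → ℝ) (q m : ℕ) :
    ∑ k ∈ range q, ∑ i ∈ range m, g (k * m + i) = ∑ j ∈ range (q * m), g j := by
  induction q with
  | zero => simp
  | succ n ih =>
      rw [Finset.sum_range_succ, ih, show (n + 1) * m = n * m + m by ring,
        Finset.sum_range_add]

lemma bs_succ (M : ℕ) (A : ℕ → ℝ) (u k : ℕ) :
    bs M A (u + 1) k = ∑ i ∈ range M, bs M A u (k * M + i) := by
  unfold bs iSum
  have h := sum_Ioc_blocks A (k * M ^ (u + 1)) (M ^ u) M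
  rw [show (k + 1) * M ^ (u + 1) = k * M ^ (u + 1) + M * M ^ u by ring, ← h]
  apply Finset.sum_congr rfl
  intro i _
  congr 2 <;> ring

lemma sum_bs (M S u : ℕ) (A : ℕ → ℝ) (hu : u ≤ S) :
    ∑ j ∈ range (M ^ (S - u)), bs M A u j = ∑ x ∈ Ioc 0 (M ^ S), A x := by
  unfold bs iSum
  have h := sum_Ioc_blocks A 0 (M ^ u) (M ^ (S - u))
  simp only [zero_add] at h
  rw [h, pow_sub_mul_pow M hu]

lemma mdAt_eq (M t k : ℕ) (A : ℕ → ℝ) :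
    mdAt M (1 + t) (k * M ^ (1 + t)) A
      = ∑ i ∈ range M, |bs M A t (k * M + i) - 1 / (M : ℝ) * bs M A (t + 1) k| := by
  unfold mdAt bs
  simp only [show 1 + t - 1 = t from by omega]
  apply Finset.sum_congr rfl
  intro i _
  rw [show k * M ^ (1 + t) + i * M ^ t = (k * M + i) * M ^ t by ring,
    show k * M ^ (1 + t) + (i + 1) * M ^ t = (k * M + i + 1) * M ^ t by ring,
    show k * M ^ (1 + t) + M ^ (1 + t) = (k + 1) * M ^ (1 + t) by ring,
    show 1 + t = t + 1 from by omega]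

lemma treemd_eq (M S : ℕ) (A : ℕ → ℝ) :
    treemd M S A
      = ∑ t ∈ range S, ∑ k ∈ range (M ^ (S - (t + 1))), ∑ i ∈ range M,
          |bs M A t (k * M + i) - 1 / (M : ℝ) * bs M A (t + 1) k| := by
  unfold treemd
  rw [← Finset.Ico_add_one_right_eq_Icc, Finset.sum_Ico_eq_sum_range]
  apply Finset.sum_congr rfl
  intro t _
  rw [show S - (t + 1) = S - (1 + t) from by omega]
  apply Finset.sum_congr rfl
  intro k _
  rw [mdAt_eq]


-- abstract real lemmas
lemma cover (K h : ℝ) : ∀ R : ℕ, K / 2 ^ R < h → h ≤ K →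
    ∃ r, r < R ∧ h ≤ K / 2 ^ r ∧ K / 2 ^ (r + 1) < h := by
  intro R
  induction R with
  | zero => intro hlt hle; simp at hlt; linarith
  | succ n ih =>
      intro hlt hle
      rcases le_or_gt h (K / 2 ^ n) with h' | h'
      · exact ⟨n, Nat.lt_succ_self n, h', hlt⟩
      · obtain ⟨r, hr, h1, h2⟩ := ih h' hle
        exact ⟨r, hr.trans (Nat.lt_succ_self n), h1, h2⟩

lemma decomp (K ε θ : ℝ) (R : ℕ) (hε : 0 < ε) (hθR : 1 / (2:ℝ) ^ R ≤ θ) (hK : 0 ≤ K)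
    (c p : ℝ) (hc0 : 0 ≤ c) (hp0 : 0 ≤ p) (hcK : c ≤ K) (hpK : p ≤ K) :
    |c - p| ≤ ε * max c p + (if max c p ≤ θ * K then max c p else 0)
      + ∑ r ∈ range R,
          (if max c p ≤ K / 2 ^ r ∧ K / 2 ^ (r + 1) < max c p ∧ ε * max c p < |c - p|
            then |c - p| else 0) := by
  have h0 : 0 ≤ max c p := le_trans hc0 (le_max_left _ _)
  have hθ0 : 0 ≤ θ := le_trans (by positivity) hθR
  have hdh : |c - p| ≤ max c p := by
    rcases le_total c p with h | h
    · rw [abs_sub_comm, abs_of_nonneg (by linarith)]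
      calc p - c ≤ p := by linarith
      _ ≤ max c p := le_max_right _ _
    · rw [abs_of_nonneg (by linarith)]
      calc c - p ≤ c := by linarith
      _ ≤ max c p := le_max_left _ _
  have hite0 : (0:ℝ) ≤ (if max c p ≤ θ * K then max c p else 0) := by
    split_ifs <;> simp [h0]
  have hsum0 : (0:ℝ) ≤ ∑ r ∈ range R,
      (if max c p ≤ K / 2 ^ r ∧ K / 2 ^ (r + 1) < max c p ∧ ε * max c p < |c - p|
        then |c - p| else 0) := by
    apply Finset.sum_nonneg
    intro r _
    split_ifs <;> simp [abs_nonneg]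
  rcases le_or_gt |c - p| (ε * max c p) with h1 | h1
  · linarith
  rcases le_or_gt (max c p) (θ * K) with h2 | h2
  · rw [if_pos h2]
    have : 0 ≤ ε * max c p := by positivity
    linarith
  · have hKle : max c p ≤ K := max_le hcK hpK
    have hlow : K / 2 ^ R < max c p := by
      have : K / 2 ^ R ≤ θ * K := by
        rw [div_eq_mul_inv, mul_comm]
        apply mul_le_mul_of_nonneg_right _ hK
        rw [← one_div]
        exact hθR
      linarith
    obtain ⟨r, hrR, hub, hlb⟩ := cover K (max c p) R hlow hKle
    have hterm : (if max c p ≤ K / 2 ^ r ∧ K / 2 ^ (r + 1) < max c p ∧ ε * max c p < |c - p|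
        then |c - p| else 0) = |c - p| := if_pos ⟨hub, hlb, h1⟩
    have hle := Finset.single_le_sum
      (f := fun j => (if max c p ≤ K / 2 ^ j ∧ K / 2 ^ (j + 1) < max c p ∧ ε * max c p < |c - p|
          then |c - p| else 0))
      (fun j _ => by split_ifs <;> simp [abs_nonneg]) (mem_range.2 hrR)
    rw [hterm] at hle
    have : 0 ≤ ε * max c p := by positivity
    linarith

lemma sparse_pt (θK c p : ℝ) (hc0 : 0 ≤ c) (hp0 : 0 ≤ p) :
    (if max c p ≤ θK then max c p else 0)
      ≤ (if c ≤ θK then c else 0) + (if p ≤ θK then p else 0) := by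
  split_ifs with h hc hp hp hc hp hp
  · exact max_le_add_of_nonneg hc0 hp0
  · exact absurd (le_trans (le_max_right _ _) h) hp
  · exact absurd (le_trans (le_max_left _ _) h) hc
  · exact absurd (le_trans (le_max_left _ _) h) hc
  all_goals positivity

lemma bandle (ε K : ℝ) (hε : 0 < ε) (hK0 : 0 ≤ K) (r : ℕ) (c p : ℝ)
    (hc0 : 0 ≤ c) (hp0 : 0 ≤ p) :
    (if max c p ≤ K / 2 ^ r ∧ K / 2 ^ (r + 1) < max c p ∧ ε * max c p < |c - p|
      then |c - p| else 0)
      ≤ (2 * 2 ^ r / (ε * K)) * (min c (K / 2 ^ r) - min p (K / 2 ^ r)) ^ 2 := by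
  split_ifs with hcond
  · obtain ⟨hub, hlb, hjump⟩ := hcond
    have h2r : (0:ℝ) < 2 ^ r := by positivity
    have hK : 0 < K := by
      rcases hK0.lt_or_eq with h | h
      · exact h
      · exfalso
        have hr0 : (0:ℝ) < 2 ^ r := by positivity
        have hKr : K / 2 ^ r ≤ 0 := by rw [← h]; simp
        have hc' : c = 0 := le_antisymm (by linarith [le_trans (le_max_left c p) hub]) hc0
        have hp' : p = 0 := le_antisymm (by linarith [le_trans (le_max_right c p) hub]) hp0
        rw [hc', hp'] at hjump
        simp at hjump
    have hc : c ≤ K / 2 ^ r := le_trans (le_max_left _ _) hub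
    have hp : p ≤ K / 2 ^ r := le_trans (le_max_right _ _) hub
    rw [min_eq_left hc, min_eq_left hp]
    have hd : ε * (K / 2 ^ (r + 1)) < |c - p| :=
      lt_of_le_of_lt (by nlinarith [hlb]) hjump
    have habs : 0 < |c - p| := lt_trans (by positivity) hd
    rw [div_mul_eq_mul_div, le_div_iff₀ (by positivity)]
    rw [← sq_abs]
    have hps : (2:ℝ) ^ (r+1) = 2 * 2 ^ r := by ring
    rw [hps] at hd
    have key : ε * K / (2 * 2 ^ r) * |c - p| < |c - p| * |c - p| := by
      apply mul_lt_mul_of_pos_right _ habs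
      calc ε * K / (2 * 2 ^ r) = ε * (K / (2 * 2 ^ r)) := by ring
      _ < |c - p| := hd
    calc |c - p| * (ε * K) = (ε * K / (2 * 2 ^ r) * |c - p|) * (2 * 2 ^ r) := by
          field_simp
      _ ≤ (|c - p| * |c - p|) * (2 * 2 ^ r) := by nlinarith [key]
      _ = 2 * 2 ^ r * |c - p| ^ 2 := by ring
  · exact mul_nonneg (div_nonneg (by positivity) (mul_nonneg hε.le hK0)) (sq_nonneg _)


section Core
variable (M S : ℕ) (A : ℕ → ℝ)

lemma bs_nonneg (hA : ∀ x, 0 ≤ A x) (u j : ℕ) : 0 ≤ bs M A u j := by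
  unfold bs iSum; exact Finset.sum_nonneg fun x _ => hA x

lemma av_nonneg (hA : ∀ x, 0 ≤ A x) (u j : ℕ) : 0 ≤ av M A u j := by
  unfold av; exact div_nonneg (bs_nonneg M A hA u j) (by positivity)

lemma bs_le (K : ℝ) (hbd : ∀ x ∈ Finset.Icc 1 (M ^ S), A x ≤ K)
    (u j : ℕ) (hu : u ≤ S) (hj : j < M ^ (S - u)) (hM : 1 ≤ M) :
    bs M A u j ≤ (M : ℝ) ^ u * K := by
  unfold bs iSum
  have hcard : (Ioc (j * M ^ u) ((j + 1) * M ^ u)).card = M ^ u := by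
    rw [Nat.card_Ioc, Nat.succ_mul, Nat.add_sub_cancel_left]
  calc ∑ x ∈ Ioc (j * M ^ u) ((j + 1) * M ^ u), A x
      ≤ ∑ _x ∈ Ioc (j * M ^ u) ((j + 1) * M ^ u), K := by
        apply Finset.sum_le_sum
        intro x hx
        apply hbd
        rw [Finset.mem_Ioc] at hx
        rw [Finset.mem_Icc]
        constructor
        · omega
        · calc x ≤ (j + 1) * M ^ u := hx.2
            _ ≤ M ^ (S - u) * M ^ u := Nat.mul_le_mul_right _ hj
            _ = M ^ S := pow_sub_mul_pow M hu
    _ = (M ^ u : ℕ) * K := by rw [Finset.sum_const, hcard, nsmul_eq_mul]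
    _ = (M : ℝ) ^ u * K := by push_cast; ring

lemma av_le (K : ℝ) (hbd : ∀ x ∈ Finset.Icc 1 (M ^ S), A x ≤ K)
    (u j : ℕ) (hu : u ≤ S) (hj : j < M ^ (S - u)) (hM : 1 ≤ M) :
    av M A u j ≤ K := by
  unfold av
  rw [div_le_iff₀ (by positivity : (0:ℝ) < (M:ℝ) ^ u)]
  · rw [mul_comm]
    exact bs_le M S A K hbd u j hu hj hM

lemma bs_eq_av (hM : 1 ≤ M) (u j : ℕ) : bs M A u j = (M : ℝ) ^ u * av M A u j := by
  unfold av
  field_simp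

lemma av_succ (hM : 1 ≤ M) (t k : ℕ) :
    (M : ℝ) * av M A (t + 1) k = ∑ i ∈ range M, av M A t (k * M + i) := by
  have hM0 : ((M:ℝ)) ^ t ≠ 0 := by positivity
  have h := bs_succ M A t k
  rw [bs_eq_av M A hM (t+1) k] at h
  have h2 : ∑ i ∈ range M, bs M A t (k * M + i)
      = (M:ℝ) ^ t * ∑ i ∈ range M, av M A t (k * M + i) := by
    rw [Finset.mul_sum]
    apply Finset.sum_congr rfl
    intro i _
    exact bs_eq_av M A hM t (k * M + i)
  rw [h2] at h
  have : (M:ℝ) ^ (t+1) = (M:ℝ)^t * M := by ring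
  rw [this, mul_assoc] at h
  exact mul_left_cancel₀ hM0 h

lemma blocksq (H βp : ℝ) (g : ℕ → ℝ) (Mn : ℕ) (hβp : βp ≤ H)
    (hmean : ∑ i ∈ range Mn, g i ≤ (Mn : ℝ) * βp) :
    ∑ i ∈ range Mn, (g i - βp) ^ 2
      ≤ (∑ i ∈ range Mn, (g i) ^ 2 - (Mn : ℝ) * βp ^ 2)
        + 2 * H * ((Mn : ℝ) * βp - ∑ i ∈ range Mn, g i) := by
  have hexp : ∑ i ∈ range Mn, (g i - βp) ^ 2
      = ∑ i ∈ range Mn, (g i) ^ 2 - 2 * βp * (∑ i ∈ range Mn, g i) + (Mn : ℝ) * βp ^ 2 := by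
    have : ∀ i ∈ range Mn, (g i - βp) ^ 2 = (g i) ^ 2 - 2 * βp * g i + βp ^ 2 := by
      intro i _; ring
    rw [Finset.sum_congr rfl this, Finset.sum_add_distrib, Finset.sum_sub_distrib,
      ← Finset.mul_sum, Finset.sum_const, Finset.card_range, nsmul_eq_mul]
  rw [hexp]
  nlinarith [mul_nonneg (sub_nonneg.2 hβp) (sub_nonneg.2 hmean)]

lemma jensen_min (H v : ℝ) (g : ℕ → ℝ) (Mn : ℕ)
    (hsum : (Mn : ℝ) * v = ∑ i ∈ range Mn, g i) :
    ∑ i ∈ range Mn, min (g i) H ≤ (Mn : ℝ) * min v H := by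
  rcases le_total v H with h | h
  · rw [min_eq_left h, hsum]
    exact Finset.sum_le_sum fun i _ => min_le_left _ _
  · rw [min_eq_right h]
    calc ∑ i ∈ range Mn, min (g i) H ≤ ∑ _i ∈ range Mn, H :=
          Finset.sum_le_sum fun i _ => min_le_right _ _
      _ = (Mn : ℝ) * H := by rw [Finset.sum_const, Finset.card_range, nsmul_eq_mul]

lemma hcnt (hM : 1 ≤ M) (t : ℕ) (ht : t < S) : M ^ (S - (t + 1)) * M = M ^ (S - t) := by
  rw [← pow_succ]
  congr 1
  omega

lemma key (hM : 1 ≤ M) (hA : ∀ x, 0 ≤ A x) (H : ℝ) (hH : 0 ≤ H) :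
    ∑ t ∈ range S, ∑ k ∈ range (M ^ (S - (t + 1))), ∑ i ∈ range M,
      (M : ℝ) ^ t * (min (av M A t (k * M + i)) H - min (av M A (t + 1) k) H) ^ 2
    ≤ 3 * H * (∑ x ∈ Ioc 0 (M ^ S), A x) := by
  set T := ∑ x ∈ Ioc 0 (M ^ S), A x with hT
  set G2 : ℕ → ℝ := fun u => ∑ j ∈ range (M ^ (S - u)), (M : ℝ) ^ u * (min (av M A u j) H) ^ 2 with hG2
  set G1 : ℕ → ℝ := fun u => ∑ j ∈ range (M ^ (S - u)), (M : ℝ) ^ u * min (av M A u j) H with hG1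
  have hmin0 : ∀ u j, 0 ≤ min (av M A u j) H := fun u j => le_min (av_nonneg M A hA u j) hH
  have main_t : ∀ t ∈ range S,
      ∑ k ∈ range (M ^ (S - (t + 1))), ∑ i ∈ range M,
        (M : ℝ) ^ t * (min (av M A t (k * M + i)) H - min (av M A (t + 1) k) H) ^ 2
      ≤ (G2 t - G2 (t + 1)) + 2 * H * (G1 (t + 1) - G1 t) := by
    intro t ht
    rw [mem_range] at ht
    have hk : ∀ k ∈ range (M ^ (S - (t + 1))),
        ∑ i ∈ range M, (M : ℝ) ^ t * (min (av M A t (k * M + i)) H - min (av M A (t + 1) k) H) ^ 2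
        ≤ ((∑ i ∈ range M, (M : ℝ) ^ t * (min (av M A t (k * M + i)) H) ^ 2)
              - (M : ℝ) ^ (t + 1) * (min (av M A (t + 1) k) H) ^ 2)
          + 2 * H * ((M : ℝ) ^ (t + 1) * min (av M A (t + 1) k) H
              - ∑ i ∈ range M, (M : ℝ) ^ t * min (av M A t (k * M + i)) H) := by
      intro k _
      have hmean : ∑ i ∈ range M, min (av M A t (k * M + i)) H
          ≤ (M : ℝ) * min (av M A (t + 1) k) H :=
        jensen_min H (av M A (t + 1) k) _ M (av_succ M A hM t k)
      have hbs := blocksq H (min (av M A (t + 1) k) H)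
        (fun i => min (av M A t (k * M + i)) H) M (min_le_right _ _) hmean
      have hMt : (0:ℝ) ≤ (M : ℝ) ^ t := by positivity
      have := mul_le_mul_of_nonneg_left hbs hMt
      calc ∑ i ∈ range M, (M : ℝ) ^ t * (min (av M A t (k * M + i)) H - min (av M A (t + 1) k) H) ^ 2
          = (M : ℝ) ^ t * ∑ i ∈ range M, (min (av M A t (k * M + i)) H - min (av M A (t + 1) k) H) ^ 2 := by
            rw [Finset.mul_sum]
        _ ≤ (M : ℝ) ^ t * (((∑ i ∈ range M, (min (av M A t (k * M + i)) H) ^ 2)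
              - (M : ℝ) * (min (av M A (t + 1) k) H) ^ 2)
            + 2 * H * ((M : ℝ) * min (av M A (t + 1) k) H
              - ∑ i ∈ range M, min (av M A t (k * M + i)) H)) := this
        _ = ((∑ i ∈ range M, (M : ℝ) ^ t * (min (av M A t (k * M + i)) H) ^ 2)
              - (M : ℝ) ^ (t + 1) * (min (av M A (t + 1) k) H) ^ 2)
          + 2 * H * ((M : ℝ) ^ (t + 1) * min (av M A (t + 1) k) H
              - ∑ i ∈ range M, (M : ℝ) ^ t * min (av M A t (k * M + i)) H) := by
            rw [← Finset.mul_sum, ← Finset.mul_sum]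
            ring
    calc ∑ k ∈ range (M ^ (S - (t + 1))), ∑ i ∈ range M,
        (M : ℝ) ^ t * (min (av M A t (k * M + i)) H - min (av M A (t + 1) k) H) ^ 2
        ≤ ∑ k ∈ range (M ^ (S - (t + 1))),
          (((∑ i ∈ range M, (M : ℝ) ^ t * (min (av M A t (k * M + i)) H) ^ 2)
              - (M : ℝ) ^ (t + 1) * (min (av M A (t + 1) k) H) ^ 2)
          + 2 * H * ((M : ℝ) ^ (t + 1) * min (av M A (t + 1) k) H
              - ∑ i ∈ range M, (M : ℝ) ^ t * min (av M A t (k * M + i)) H)) :=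
          Finset.sum_le_sum hk
      _ = (G2 t - G2 (t + 1)) + 2 * H * (G1 (t + 1) - G1 t) := by
          have e1 : ∑ k ∈ range (M ^ (S - (t + 1))), ∑ i ∈ range M,
              (M : ℝ) ^ t * (min (av M A t (k * M + i)) H) ^ 2 = G2 t := by
            rw [hG2]
            rw [sum_range_mul' (fun j => (M : ℝ) ^ t * (min (av M A t j) H) ^ 2) (M ^ (S - (t+1))) M,
              hcnt M S hM t ht]
          have e2 : ∑ k ∈ range (M ^ (S - (t + 1))),
              (M : ℝ) ^ (t + 1) * (min (av M A (t + 1) k) H) ^ 2 = G2 (t + 1) := by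
            rw [hG2]
          have e3 : ∑ k ∈ range (M ^ (S - (t + 1))), ∑ i ∈ range M,
              (M : ℝ) ^ t * min (av M A t (k * M + i)) H = G1 t := by
            rw [hG1]
            rw [sum_range_mul' (fun j => (M : ℝ) ^ t * min (av M A t j) H) (M ^ (S - (t+1))) M,
              hcnt M S hM t ht]
          have e4 : ∑ k ∈ range (M ^ (S - (t + 1))),
              (M : ℝ) ^ (t + 1) * min (av M A (t + 1) k) H = G1 (t + 1) := by
            rw [hG1]
          rw [Finset.sum_add_distrib, Finset.sum_sub_distrib, e1, e2, ← Finset.mul_sum,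
            Finset.sum_sub_distrib, e4, e3]
  have tele : ∑ t ∈ range S, ((G2 t - G2 (t + 1)) + 2 * H * (G1 (t + 1) - G1 t))
      = (G2 0 - G2 S) + 2 * H * (G1 S - G1 0) := by
    rw [Finset.sum_add_distrib, Finset.sum_range_sub' G2, ← Finset.mul_sum,
      Finset.sum_range_sub G1]
  have hG2S : 0 ≤ G2 S := by
    apply Finset.sum_nonneg
    intro j _
    positivity
  have hG10 : 0 ≤ G1 0 := by
    apply Finset.sum_nonneg
    intro j _
    exact mul_nonneg (by positivity) (hmin0 0 j)
  have hT0 : 0 ≤ T := Finset.sum_nonneg fun x _ => hA x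
  have hG20 : G2 0 ≤ H * T := by
    rw [hG2, hT]
    rw [← sum_bs M S 0 A (Nat.zero_le S), Finset.mul_sum]
    apply Finset.sum_le_sum
    intro j _
    have h1 : (M : ℝ) ^ 0 * (min (av M A 0 j) H) ^ 2 = (min (av M A 0 j) H) ^ 2 := by
      norm_num
    rw [h1]
    have h2 : av M A 0 j = bs M A 0 j := by
      unfold av
      norm_num
    rw [← h2]
    have h3 := hmin0 0 j
    have h4 : min (av M A 0 j) H ≤ H := min_le_right _ _
    have h5 : min (av M A 0 j) H ≤ av M A 0 j := min_le_left _ _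
    nlinarith
  have hG1S : G1 S ≤ T := by
    rw [hG1, hT]
    dsimp only
    rw [Nat.sub_self, pow_zero, Finset.sum_range_one]
    have h2 : (M:ℝ) ^ S * av M A S 0 = bs M A S 0 := (bs_eq_av M A hM S 0).symm
    have h3 : bs M A S 0 = ∑ x ∈ Ioc 0 (M ^ S), A x := by
      unfold bs iSum
      norm_num
    calc (M:ℝ) ^ S * min (av M A S 0) H ≤ (M:ℝ) ^ S * av M A S 0 := by
          apply mul_le_mul_of_nonneg_left (min_le_left _ _) (by positivity)
      _ = ∑ x ∈ Ioc 0 (M ^ S), A x := by rw [h2, h3]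
  calc ∑ t ∈ range S, ∑ k ∈ range (M ^ (S - (t + 1))), ∑ i ∈ range M,
      (M : ℝ) ^ t * (min (av M A t (k * M + i)) H - min (av M A (t + 1) k) H) ^ 2
      ≤ ∑ t ∈ range S, ((G2 t - G2 (t + 1)) + 2 * H * (G1 (t + 1) - G1 t)) :=
        Finset.sum_le_sum main_t
    _ = (G2 0 - G2 S) + 2 * H * (G1 S - G1 0) := tele
    _ ≤ G2 0 + 2 * H * G1 S := by nlinarith [mul_nonneg hH hG10]
    _ ≤ H * T + 2 * H * T := by nlinarith [mul_nonneg hH (sub_nonneg.2 hG1S)]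
    _ = 3 * H * T := by ring

lemma treemd_eq_av (hM : 1 ≤ M) :
    treemd M S A
      = ∑ t ∈ range S, ∑ k ∈ range (M ^ (S - (t + 1))), ∑ i ∈ range M,
          (M : ℝ) ^ t * |av M A t (k * M + i) - av M A (t + 1) k| := by
  rw [treemd_eq]
  apply Finset.sum_congr rfl; intro t _
  apply Finset.sum_congr rfl; intro k _
  apply Finset.sum_congr rfl; intro i _
  have hMne : ((M:ℝ)) ≠ 0 := by positivity
  rw [bs_eq_av M A hM t (k*M+i), bs_eq_av M A hM (t+1) k]
  have h1 : (M:ℝ)^t * av M A t (k*M+i) - 1/(M:ℝ) * ((M:ℝ)^(t+1) * av M A (t+1) k)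
      = (M:ℝ)^t * (av M A t (k*M+i) - av M A (t+1) k) := by
    field_simp
    ring
  rw [h1, abs_mul, abs_of_nonneg (by positivity : (0:ℝ) ≤ (M:ℝ)^t)]

lemma main_nonneg (hM : 2 ≤ M) (hA : ∀ x, 0 ≤ A x) (K ε θ : ℝ) (R : ℕ)
    (hK0 : 0 ≤ K) (hε : 0 < ε) (hθR : 1 / (2:ℝ) ^ R ≤ θ)
    (hbd : ∀ x ∈ Finset.Icc 1 (M ^ S), A x ≤ K) :
    treemd M S A ≤ 2 * ε * S * (∑ x ∈ Ioc 0 (M ^ S), A x)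
      + 2 * S * θ * K * (M : ℝ) ^ S
      + 6 * R * (∑ x ∈ Ioc 0 (M ^ S), A x) / ε := by
  have hM1 : 1 ≤ M := by omega
  set T := ∑ x ∈ Ioc 0 (M ^ S), A x with hT
  have hT0 : 0 ≤ T := Finset.sum_nonneg fun x _ => hA x
  have hθ0 : 0 ≤ θ := le_trans (by positivity) hθR
  -- index bounds
  have hidx : ∀ t k i, t < S → k < M ^ (S - (t+1)) → i < M → k * M + i < M ^ (S - t) := by
    intro t k i ht hk hi
    calc k * M + i < (k + 1) * M := by nlinarith
      _ ≤ M ^ (S - (t+1)) * M := Nat.mul_le_mul_right _ hk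
      _ = M ^ (S - t) := hcnt M S hM1 t ht
  have hcK : ∀ t k i, t < S → k < M ^ (S - (t+1)) → i < M → av M A t (k*M+i) ≤ K := by
    intro t k i ht hk hi
    exact av_le M S A K hbd t _ (by omega) (hidx t k i ht hk hi) hM1
  have hpK : ∀ t k, t < S → k < M ^ (S - (t+1)) → av M A (t+1) k ≤ K := by
    intro t k ht hk
    exact av_le M S A K hbd (t+1) k (by omega) hk hM1
  -- scale-wise full sums
  have hc_sum : ∀ t, t < S →
      ∑ k ∈ range (M ^ (S - (t+1))), ∑ i ∈ range M, (M:ℝ)^t * av M A t (k*M+i) = T := by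
    intro t ht
    have e : ∀ k i, (M:ℝ)^t * av M A t (k*M+i) = bs M A t (k*M+i) :=
      fun k i => (bs_eq_av M A hM1 t (k*M+i)).symm
    calc ∑ k ∈ range (M ^ (S - (t+1))), ∑ i ∈ range M, (M:ℝ)^t * av M A t (k*M+i)
        = ∑ k ∈ range (M ^ (S - (t+1))), ∑ i ∈ range M, bs M A t (k*M+i) := by
          apply Finset.sum_congr rfl; intro k _; apply Finset.sum_congr rfl; intro i _; rw [e]
      _ = ∑ j ∈ range (M ^ (S - (t+1)) * M), bs M A t j := sum_range_mul' _ _ _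
      _ = ∑ j ∈ range (M ^ (S - t)), bs M A t j := by rw [hcnt M S hM1 t ht]
      _ = T := sum_bs M S t A (by omega)
  have hp_sum : ∀ t, t < S →
      ∑ k ∈ range (M ^ (S - (t+1))), ∑ i ∈ range M, (M:ℝ)^t * av M A (t+1) k = T := by
    intro t ht
    calc ∑ k ∈ range (M ^ (S - (t+1))), ∑ i ∈ range M, (M:ℝ)^t * av M A (t+1) k
        = ∑ k ∈ range (M ^ (S - (t+1))), (M:ℝ) * ((M:ℝ)^t * av M A (t+1) k) := by
          apply Finset.sum_congr rfl; intro k _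
          rw [Finset.sum_const, Finset.card_range, nsmul_eq_mul]
      _ = ∑ k ∈ range (M ^ (S - (t+1))), bs M A (t+1) k := by
          apply Finset.sum_congr rfl; intro k _
          rw [bs_eq_av M A hM1 (t+1) k]
          ring
      _ = T := sum_bs M S (t+1) A (by omega)
  -- Sigma1
  have S1 : ∑ t ∈ range S, ∑ k ∈ range (M ^ (S - (t+1))), ∑ i ∈ range M,
      (M:ℝ)^t * (ε * max (av M A t (k*M+i)) (av M A (t+1) k)) ≤ 2 * ε * S * T := by
    have step : ∀ t ∈ range S,
        ∑ k ∈ range (M ^ (S - (t+1))), ∑ i ∈ range M,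
          (M:ℝ)^t * (ε * max (av M A t (k*M+i)) (av M A (t+1) k)) ≤ ε * (T + T) := by
      intro t ht
      rw [mem_range] at ht
      have hpt : ∀ k ∈ range (M ^ (S - (t+1))), ∀ i ∈ range M,
          (M:ℝ)^t * (ε * max (av M A t (k*M+i)) (av M A (t+1) k))
            ≤ ε * ((M:ℝ)^t * av M A t (k*M+i) + (M:ℝ)^t * av M A (t+1) k) := by
        intro k _ i _
        have hmax : max (av M A t (k*M+i)) (av M A (t+1) k)
            ≤ av M A t (k*M+i) + av M A (t+1) k :=
          max_le_add_of_nonneg (av_nonneg M A hA _ _) (av_nonneg M A hA _ _)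
        have hMt : (0:ℝ) ≤ (M:ℝ)^t := by positivity
        calc (M:ℝ)^t * (ε * max (av M A t (k*M+i)) (av M A (t+1) k))
            = ε * ((M:ℝ)^t * max (av M A t (k*M+i)) (av M A (t+1) k)) := by ring
          _ ≤ ε * ((M:ℝ)^t * (av M A t (k*M+i) + av M A (t+1) k)) := by
              apply mul_le_mul_of_nonneg_left _ hε.le
              exact mul_le_mul_of_nonneg_left hmax hMt
          _ = ε * ((M:ℝ)^t * av M A t (k*M+i) + (M:ℝ)^t * av M A (t+1) k) := by ring
      calc ∑ k ∈ range (M ^ (S - (t+1))), ∑ i ∈ range M,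
          (M:ℝ)^t * (ε * max (av M A t (k*M+i)) (av M A (t+1) k))
          ≤ ∑ k ∈ range (M ^ (S - (t+1))), ∑ i ∈ range M,
            ε * ((M:ℝ)^t * av M A t (k*M+i) + (M:ℝ)^t * av M A (t+1) k) := by
            apply Finset.sum_le_sum; intro k hk
            exact Finset.sum_le_sum (hpt k hk)
        _ = ε * ((∑ k ∈ range (M ^ (S - (t+1))), ∑ i ∈ range M, (M:ℝ)^t * av M A t (k*M+i))
              + ∑ k ∈ range (M ^ (S - (t+1))), ∑ i ∈ range M, (M:ℝ)^t * av M A (t+1) k) := by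
            simp only [mul_add, Finset.mul_sum, Finset.sum_add_distrib]
        _ = ε * (T + T) := by rw [hc_sum t ht, hp_sum t ht]
    calc ∑ t ∈ range S, ∑ k ∈ range (M ^ (S - (t+1))), ∑ i ∈ range M,
        (M:ℝ)^t * (ε * max (av M A t (k*M+i)) (av M A (t+1) k))
        ≤ ∑ _t ∈ range S, ε * (T + T) := Finset.sum_le_sum step
      _ = (S:ℝ) * (ε * (T + T)) := by rw [Finset.sum_const, Finset.card_range, nsmul_eq_mul]
      _ = 2 * ε * S * T := by ring
  -- Sigma2
  have S2 : ∑ t ∈ range S, ∑ k ∈ range (M ^ (S - (t+1))), ∑ i ∈ range M,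
      (M:ℝ)^t * (if max (av M A t (k*M+i)) (av M A (t+1) k) ≤ θ * K
        then max (av M A t (k*M+i)) (av M A (t+1) k) else 0)
      ≤ 2 * S * θ * K * (M:ℝ)^S := by
    have hθK : 0 ≤ θ * K := mul_nonneg hθ0 hK0
    have step : ∀ t ∈ range S,
        ∑ k ∈ range (M ^ (S - (t+1))), ∑ i ∈ range M,
          (M:ℝ)^t * (if max (av M A t (k*M+i)) (av M A (t+1) k) ≤ θ * K
            then max (av M A t (k*M+i)) (av M A (t+1) k) else 0)
          ≤ 2 * (θ * K * (M:ℝ)^S) := by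
      intro t ht
      rw [mem_range] at ht
      have hcast : ((M ^ (S - (t+1)) : ℕ):ℝ) * ((M:ℕ):ℝ) * (M:ℝ)^t = (M:ℝ)^S := by
        have hnat : M ^ (S - (t+1)) * M * M ^ t = M ^ S := by
          rw [hcnt M S hM1 t ht, pow_sub_mul_pow M (by omega : t ≤ S)]
        calc ((M ^ (S - (t+1)) : ℕ):ℝ) * ((M:ℕ):ℝ) * (M:ℝ)^t
            = ((M ^ (S - (t+1)) * M * M ^ t : ℕ):ℝ) := by push_cast; ring
          _ = ((M ^ S : ℕ):ℝ) := by rw [hnat]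
          _ = (M:ℝ)^S := by push_cast; ring
      have hpt : ∀ k ∈ range (M ^ (S - (t+1))), ∀ i ∈ range M,
          (M:ℝ)^t * (if max (av M A t (k*M+i)) (av M A (t+1) k) ≤ θ * K
            then max (av M A t (k*M+i)) (av M A (t+1) k) else 0)
          ≤ (M:ℝ)^t * ((if av M A t (k*M+i) ≤ θ * K then av M A t (k*M+i) else 0)
              + (if av M A (t+1) k ≤ θ * K then av M A (t+1) k else 0)) := by
        intro k _ i _
        apply mul_le_mul_of_nonneg_left _ (by positivity : (0:ℝ) ≤ (M:ℝ)^t)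
        exact sparse_pt (θ * K) _ _ (av_nonneg M A hA _ _) (av_nonneg M A hA _ _)
      have hite1 : ∀ u j, (if av M A u j ≤ θ * K then av M A u j else 0) ≤ θ * K := by
        intro u j
        split_ifs with h
        · exact h
        · exact hθK
      calc ∑ k ∈ range (M ^ (S - (t+1))), ∑ i ∈ range M,
          (M:ℝ)^t * (if max (av M A t (k*M+i)) (av M A (t+1) k) ≤ θ * K
            then max (av M A t (k*M+i)) (av M A (t+1) k) else 0)
          ≤ ∑ k ∈ range (M ^ (S - (t+1))), ∑ i ∈ range M,
            (M:ℝ)^t * ((if av M A t (k*M+i) ≤ θ * K then av M A t (k*M+i) else 0)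
              + (if av M A (t+1) k ≤ θ * K then av M A (t+1) k else 0)) := by
            apply Finset.sum_le_sum; intro k hk
            exact Finset.sum_le_sum (hpt k hk)
        _ ≤ ∑ k ∈ range (M ^ (S - (t+1))), ∑ i ∈ range M, (M:ℝ)^t * (θ * K + θ * K) := by
            apply Finset.sum_le_sum; intro k _
            apply Finset.sum_le_sum; intro i _
            apply mul_le_mul_of_nonneg_left _ (by positivity : (0:ℝ) ≤ (M:ℝ)^t)
            exact add_le_add (hite1 t (k*M+i)) (hite1 (t+1) k)
        _ = ((M ^ (S - (t+1)) : ℕ):ℝ) * (((M:ℕ):ℝ) * ((M:ℝ)^t * (θ * K + θ * K))) := by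
            rw [Finset.sum_const, Finset.card_range, nsmul_eq_mul, Finset.sum_const,
              Finset.card_range, nsmul_eq_mul]
        _ = 2 * (θ * K * (((M ^ (S - (t+1)) : ℕ):ℝ) * ((M:ℕ):ℝ) * (M:ℝ)^t)) := by ring
        _ = 2 * (θ * K * (M:ℝ)^S) := by rw [hcast]
    calc ∑ t ∈ range S, ∑ k ∈ range (M ^ (S - (t+1))), ∑ i ∈ range M,
        (M:ℝ)^t * (if max (av M A t (k*M+i)) (av M A (t+1) k) ≤ θ * K
          then max (av M A t (k*M+i)) (av M A (t+1) k) else 0)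
        ≤ ∑ _t ∈ range S, 2 * (θ * K * (M:ℝ)^S) := Finset.sum_le_sum step
      _ = (S:ℝ) * (2 * (θ * K * (M:ℝ)^S)) := by
          rw [Finset.sum_const, Finset.card_range, nsmul_eq_mul]
      _ = 2 * S * θ * K * (M:ℝ)^S := by ring
  -- Sigma3
  have S3 : ∑ t ∈ range S, ∑ k ∈ range (M ^ (S - (t+1))), ∑ i ∈ range M,
      (M:ℝ)^t * (∑ r ∈ range R,
        (if max (av M A t (k*M+i)) (av M A (t+1) k) ≤ K / 2 ^ r ∧
            K / 2 ^ (r+1) < max (av M A t (k*M+i)) (av M A (t+1) k) ∧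
            ε * max (av M A t (k*M+i)) (av M A (t+1) k)
              < |av M A t (k*M+i) - av M A (t+1) k|
          then |av M A t (k*M+i) - av M A (t+1) k| else 0))
      ≤ 6 * R * T / ε := by
    have swap : ∑ t ∈ range S, ∑ k ∈ range (M ^ (S - (t+1))), ∑ i ∈ range M,
        (M:ℝ)^t * (∑ r ∈ range R,
          (if max (av M A t (k*M+i)) (av M A (t+1) k) ≤ K / 2 ^ r ∧
              K / 2 ^ (r+1) < max (av M A t (k*M+i)) (av M A (t+1) k) ∧
              ε * max (av M A t (k*M+i)) (av M A (t+1) k)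
                < |av M A t (k*M+i) - av M A (t+1) k|
            then |av M A t (k*M+i) - av M A (t+1) k| else 0))
        = ∑ r ∈ range R, ∑ t ∈ range S, ∑ k ∈ range (M ^ (S - (t+1))), ∑ i ∈ range M,
          (M:ℝ)^t * (if max (av M A t (k*M+i)) (av M A (t+1) k) ≤ K / 2 ^ r ∧
              K / 2 ^ (r+1) < max (av M A t (k*M+i)) (av M A (t+1) k) ∧
              ε * max (av M A t (k*M+i)) (av M A (t+1) k)
                < |av M A t (k*M+i) - av M A (t+1) k|
            then |av M A t (k*M+i) - av M A (t+1) k| else 0) := by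
      simp only [Finset.mul_sum]
      calc ∑ t ∈ range S, ∑ k ∈ range (M ^ (S - (t+1))), ∑ i ∈ range M, ∑ r ∈ range R, _
          = ∑ t ∈ range S, ∑ k ∈ range (M ^ (S - (t+1))), ∑ r ∈ range R, ∑ i ∈ range M, _ :=
            Finset.sum_congr rfl fun t _ => Finset.sum_congr rfl fun k _ => Finset.sum_comm
        _ = ∑ t ∈ range S, ∑ r ∈ range R, ∑ k ∈ range (M ^ (S - (t+1))), ∑ i ∈ range M, _ :=
            Finset.sum_congr rfl fun t _ => Finset.sum_comm
        _ = ∑ r ∈ range R, ∑ t ∈ range S, ∑ k ∈ range (M ^ (S - (t+1))), ∑ i ∈ range M, _ :=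
            Finset.sum_comm
    rw [swap]
    have per_r : ∀ r ∈ range R, ∑ t ∈ range S, ∑ k ∈ range (M ^ (S - (t+1))), ∑ i ∈ range M,
        (M:ℝ)^t * (if max (av M A t (k*M+i)) (av M A (t+1) k) ≤ K / 2 ^ r ∧
            K / 2 ^ (r+1) < max (av M A t (k*M+i)) (av M A (t+1) k) ∧
            ε * max (av M A t (k*M+i)) (av M A (t+1) k)
              < |av M A t (k*M+i) - av M A (t+1) k|
          then |av M A t (k*M+i) - av M A (t+1) k| else 0)
        ≤ 6 * T / ε := by
      intro r _
      have hcoef : (0:ℝ) ≤ 2 * 2 ^ r / (ε * K) :=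
        div_nonneg (by positivity) (mul_nonneg hε.le hK0)
      have hHr : (0:ℝ) ≤ K / 2 ^ r := div_nonneg hK0 (by positivity)
      calc ∑ t ∈ range S, ∑ k ∈ range (M ^ (S - (t+1))), ∑ i ∈ range M,
          (M:ℝ)^t * (if max (av M A t (k*M+i)) (av M A (t+1) k) ≤ K / 2 ^ r ∧
              K / 2 ^ (r+1) < max (av M A t (k*M+i)) (av M A (t+1) k) ∧
              ε * max (av M A t (k*M+i)) (av M A (t+1) k)
                < |av M A t (k*M+i) - av M A (t+1) k|
            then |av M A t (k*M+i) - av M A (t+1) k| else 0)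
          ≤ ∑ t ∈ range S, ∑ k ∈ range (M ^ (S - (t+1))), ∑ i ∈ range M,
            (2 * 2 ^ r / (ε * K)) * ((M:ℝ)^t *
              (min (av M A t (k*M+i)) (K / 2 ^ r) - min (av M A (t+1) k) (K / 2 ^ r)) ^ 2) := by
            apply Finset.sum_le_sum; intro t _
            apply Finset.sum_le_sum; intro k _
            apply Finset.sum_le_sum; intro i _
            have hb := bandle ε K hε hK0 r (av M A t (k*M+i)) (av M A (t+1) k)
              (av_nonneg M A hA _ _) (av_nonneg M A hA _ _)
            calc (M:ℝ)^t * _ ≤ (M:ℝ)^t * ((2 * 2 ^ r / (ε * K)) *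
                (min (av M A t (k*M+i)) (K / 2 ^ r) - min (av M A (t+1) k) (K / 2 ^ r)) ^ 2) :=
                mul_le_mul_of_nonneg_left hb (by positivity)
              _ = (2 * 2 ^ r / (ε * K)) * ((M:ℝ)^t *
                (min (av M A t (k*M+i)) (K / 2 ^ r) - min (av M A (t+1) k) (K / 2 ^ r)) ^ 2) := by
                ring
        _ = (2 * 2 ^ r / (ε * K)) * ∑ t ∈ range S, ∑ k ∈ range (M ^ (S - (t+1))), ∑ i ∈ range M,
              (M:ℝ)^t * (min (av M A t (k*M+i)) (K / 2 ^ r) - min (av M A (t+1) k) (K / 2 ^ r)) ^ 2 := by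
            simp only [← Finset.mul_sum]
        _ ≤ (2 * 2 ^ r / (ε * K)) * (3 * (K / 2 ^ r) * T) := by
            apply mul_le_mul_of_nonneg_left _ hcoef
            exact key M S A hM1 hA (K / 2 ^ r) hHr
        _ ≤ 6 * T / ε := by
            rcases hK0.lt_or_eq with hKpos | hKzero
            · apply le_of_eq
              field_simp
              ring
            · rw [← hKzero]
              simp
              positivity
    calc ∑ r ∈ range R, ∑ t ∈ range S, ∑ k ∈ range (M ^ (S - (t+1))), ∑ i ∈ range M,
        (M:ℝ)^t * (if max (av M A t (k*M+i)) (av M A (t+1) k) ≤ K / 2 ^ r ∧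
            K / 2 ^ (r+1) < max (av M A t (k*M+i)) (av M A (t+1) k) ∧
            ε * max (av M A t (k*M+i)) (av M A (t+1) k)
              < |av M A t (k*M+i) - av M A (t+1) k|
          then |av M A t (k*M+i) - av M A (t+1) k| else 0)
        ≤ ∑ _r ∈ range R, 6 * T / ε := Finset.sum_le_sum per_r
      _ = (R:ℝ) * (6 * T / ε) := by rw [Finset.sum_const, Finset.card_range, nsmul_eq_mul]
      _ = 6 * R * T / ε := by ring
  -- assemble
  rw [treemd_eq_av M S A hM1]
  have hdec : ∀ t ∈ range S, ∀ k ∈ range (M ^ (S - (t+1))), ∀ i ∈ range M,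
      (M:ℝ)^t * |av M A t (k*M+i) - av M A (t+1) k|
        ≤ (M:ℝ)^t * (ε * max (av M A t (k*M+i)) (av M A (t+1) k))
          + (M:ℝ)^t * (if max (av M A t (k*M+i)) (av M A (t+1) k) ≤ θ * K
              then max (av M A t (k*M+i)) (av M A (t+1) k) else 0)
          + (M:ℝ)^t * (∑ r ∈ range R,
              (if max (av M A t (k*M+i)) (av M A (t+1) k) ≤ K / 2 ^ r ∧
                  K / 2 ^ (r+1) < max (av M A t (k*M+i)) (av M A (t+1) k) ∧
                  ε * max (av M A t (k*M+i)) (av M A (t+1) k)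
                    < |av M A t (k*M+i) - av M A (t+1) k|
                then |av M A t (k*M+i) - av M A (t+1) k| else 0)) := by
    intro t ht k hk i hi
    rw [mem_range] at ht hk hi
    have hd := decomp K ε θ R hε hθR hK0 (av M A t (k*M+i)) (av M A (t+1) k)
      (av_nonneg M A hA _ _) (av_nonneg M A hA _ _)
      (hcK t k i ht hk hi) (hpK t k ht hk)
    calc (M:ℝ)^t * |av M A t (k*M+i) - av M A (t+1) k|
        ≤ (M:ℝ)^t * (ε * max (av M A t (k*M+i)) (av M A (t+1) k)
            + (if max (av M A t (k*M+i)) (av M A (t+1) k) ≤ θ * K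
                then max (av M A t (k*M+i)) (av M A (t+1) k) else 0)
            + ∑ r ∈ range R,
              (if max (av M A t (k*M+i)) (av M A (t+1) k) ≤ K / 2 ^ r ∧
                  K / 2 ^ (r+1) < max (av M A t (k*M+i)) (av M A (t+1) k) ∧
                  ε * max (av M A t (k*M+i)) (av M A (t+1) k)
                    < |av M A t (k*M+i) - av M A (t+1) k|
                then |av M A t (k*M+i) - av M A (t+1) k| else 0)) :=
          mul_le_mul_of_nonneg_left hd (by positivity)
      _ = _ := by ring
  calc ∑ t ∈ range S, ∑ k ∈ range (M ^ (S - (t+1))), ∑ i ∈ range M,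
      (M:ℝ)^t * |av M A t (k*M+i) - av M A (t+1) k|
      ≤ ∑ t ∈ range S, ∑ k ∈ range (M ^ (S - (t+1))), ∑ i ∈ range M,
        ((M:ℝ)^t * (ε * max (av M A t (k*M+i)) (av M A (t+1) k))
          + (M:ℝ)^t * (if max (av M A t (k*M+i)) (av M A (t+1) k) ≤ θ * K
              then max (av M A t (k*M+i)) (av M A (t+1) k) else 0)
          + (M:ℝ)^t * (∑ r ∈ range R,
              (if max (av M A t (k*M+i)) (av M A (t+1) k) ≤ K / 2 ^ r ∧
                  K / 2 ^ (r+1) < max (av M A t (k*M+i)) (av M A (t+1) k) ∧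
                  ε * max (av M A t (k*M+i)) (av M A (t+1) k)
                    < |av M A t (k*M+i) - av M A (t+1) k|
                then |av M A t (k*M+i) - av M A (t+1) k| else 0))) := by
        apply Finset.sum_le_sum; intro t ht
        apply Finset.sum_le_sum; intro k hk
        apply Finset.sum_le_sum; intro i hi
        exact hdec t ht k hk i hi
    _ = (∑ t ∈ range S, ∑ k ∈ range (M ^ (S - (t+1))), ∑ i ∈ range M,
          (M:ℝ)^t * (ε * max (av M A t (k*M+i)) (av M A (t+1) k)))
        + (∑ t ∈ range S, ∑ k ∈ range (M ^ (S - (t+1))), ∑ i ∈ range M,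
          (M:ℝ)^t * (if max (av M A t (k*M+i)) (av M A (t+1) k) ≤ θ * K
              then max (av M A t (k*M+i)) (av M A (t+1) k) else 0))
        + (∑ t ∈ range S, ∑ k ∈ range (M ^ (S - (t+1))), ∑ i ∈ range M,
          (M:ℝ)^t * (∑ r ∈ range R,
              (if max (av M A t (k*M+i)) (av M A (t+1) k) ≤ K / 2 ^ r ∧
                  K / 2 ^ (r+1) < max (av M A t (k*M+i)) (av M A (t+1) k) ∧
                  ε * max (av M A t (k*M+i)) (av M A (t+1) k)
                    < |av M A t (k*M+i) - av M A (t+1) k|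
                then |av M A t (k*M+i) - av M A (t+1) k| else 0))) := by
        simp only [Finset.sum_add_distrib]
    _ ≤ 2 * ε * S * T + 2 * S * θ * K * (M:ℝ)^S + 6 * R * T / ε := by
        have := S1; have := S2; have := S3
        linarith

end Core

lemma treemd_split (M S : ℕ) (A : ℕ → ℝ) :
    treemd M S A ≤ treemd M S (fun x => max (A x) 0) + treemd M S (fun x => max (-A x) 0) := by
  unfold treemd
  rw [← Finset.sum_add_distrib]
  apply Finset.sum_le_sum; intro s _
  rw [← Finset.sum_add_distrib]
  apply Finset.sum_le_sum; intro k _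
  unfold mdAt
  rw [← Finset.sum_add_distrib]
  apply Finset.sum_le_sum; intro i _
  have hs : ∀ l r : ℕ, iSum A l r
      = iSum (fun x => max (A x) 0) l r - iSum (fun x => max (-A x) 0) l r := by
    intro l r
    unfold iSum
    rw [← Finset.sum_sub_distrib]
    apply Finset.sum_congr rfl
    intro x _
    rcases le_total (A x) 0 with h | h
    · rw [max_eq_right h, max_eq_left (by linarith)]
      ring
    · rw [max_eq_left h, max_eq_right (by linarith)]
      ring
  rw [hs, hs]
  have hre : ∀ a b c d e : ℝ, (a - b) - e * (c - d) = (a - e * c) - (b - e * d) := by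
    intros; ring
  rw [hre]
  exact abs_sub _ _

lemma Rbound (S : ℕ) (hS : 1 ≤ S) :
    ((Nat.ceil ((S:ℝ) ^ ((3:ℝ)/200) + Real.logb 2 (4*S)) : ℕ) : ℝ)
      ≤ 108 * (S:ℝ) ^ ((1:ℝ)/50) := by
  have hS1 : (1:ℝ) ≤ (S:ℝ) := by exact_mod_cast hS
  have hSpos : (0:ℝ) < S := by linarith
  have h4S : (0:ℝ) < 4*S := by linarith
  have hlog2 : (1:ℝ)/2 < Real.log 2 := by
    have := Real.log_two_gt_d9
    linarith
  have hpow1 : (1:ℝ) ≤ (S:ℝ) ^ ((1:ℝ)/50) := by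
    calc (1:ℝ) = (1:ℝ) ^ ((1:ℝ)/50) := (Real.one_rpow _).symm
      _ ≤ (S:ℝ) ^ ((1:ℝ)/50) := Real.rpow_le_rpow zero_le_one hS1 (by norm_num)
  have h1 : (S:ℝ) ^ ((3:ℝ)/200) ≤ (S:ℝ) ^ ((1:ℝ)/50) :=
    Real.rpow_le_rpow_of_exponent_le hS1 (by norm_num)
  have hlogS : Real.log S ≤ 50 * (S:ℝ) ^ ((1:ℝ)/50) := by
    have e : Real.log ((S:ℝ) ^ ((1:ℝ)/50)) = (1/50) * Real.log S := Real.log_rpow hSpos _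
    have hb : Real.log ((S:ℝ) ^ ((1:ℝ)/50)) ≤ (S:ℝ) ^ ((1:ℝ)/50) - 1 :=
      Real.log_le_sub_one_of_pos (by positivity)
    rw [e] at hb
    nlinarith
  have hlog4 : Real.log 4 ≤ 3 := by
    have := Real.log_le_sub_one_of_pos (by norm_num : (0:ℝ) < 4)
    linarith
  have hlog4S : Real.log (4*S) ≤ 3 + 50 * (S:ℝ) ^ ((1:ℝ)/50) := by
    rw [Real.log_mul (by norm_num) (by positivity)]
    linarith
  have hlogb : Real.logb 2 (4*S) ≤ 2 * (3 + 50 * (S:ℝ) ^ ((1:ℝ)/50)) := by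
    rw [Real.logb, div_le_iff₀ (by linarith : (0:ℝ) < Real.log 2)]
    have hlog4Snn : 0 ≤ Real.log (4*S) := Real.log_nonneg (by linarith)
    nlinarith
  have hρ1 : (S:ℝ) ^ ((3:ℝ)/200) + Real.logb 2 (4*S) + 1 ≤ 108 * (S:ℝ) ^ ((1:ℝ)/50) := by
    nlinarith
  have hceil : ((Nat.ceil ((S:ℝ) ^ ((3:ℝ)/200) + Real.logb 2 (4*S)) : ℕ) : ℝ)
      < ((S:ℝ) ^ ((3:ℝ)/200) + Real.logb 2 (4*S)) + 1 := by
    apply Nat.ceil_lt_add_one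
    have : (0:ℝ) ≤ Real.logb 2 (4*S) := Real.logb_nonneg (by norm_num) (by linarith)
    positivity
  linarith

lemma final (M S : ℕ) (hM : 2 ≤ M) (hS : 1 ≤ S) (A : ℕ → ℝ) (K : ℝ)
    (hKb : ∀ x ∈ Finset.Icc 1 (M ^ S), |A x| ≤ K) (hK0 : 0 ≤ K) :
    treemd M S A ≤
      1000 * ((∑ x ∈ Finset.Icc 1 (M ^ S), |A x|) * (S : ℝ) ^ ((51 : ℝ) / 100) +
        K * (M:ℝ) ^ S * (2 : ℝ) ^ (-(S : ℝ) ^ ((3 : ℝ) / 200))) := by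
  have hS1 : (1:ℝ) ≤ (S:ℝ) := by exact_mod_cast hS
  have hSpos : (0:ℝ) < S := by linarith
  set T := ∑ x ∈ Finset.Icc 1 (M ^ S), |A x| with hT
  have hT0 : 0 ≤ T := Finset.sum_nonneg fun x _ => abs_nonneg _
  set ε := (S:ℝ) ^ (-(49:ℝ)/100) with hεdef
  have hε : 0 < ε := Real.rpow_pos_of_pos hSpos _
  set ρ := (S:ℝ) ^ ((3:ℝ)/200) + Real.logb 2 (4*S) with hρdef
  have hρ0 : 0 ≤ ρ := by
    have : (0:ℝ) ≤ Real.logb 2 (4*S) := Real.logb_nonneg (by norm_num) (by linarith)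
    positivity
  set R := Nat.ceil ρ with hRdef
  set θ := (2:ℝ) ^ (-ρ) with hθdef
  have hθR : 1/(2:ℝ)^R ≤ θ := by
    rw [hθdef, one_div, show ((2:ℝ)^R)⁻¹ = (2:ℝ) ^ (-(R:ℝ)) by
      rw [← Real.rpow_natCast 2 R, ← Real.rpow_neg (by norm_num)]]
    apply Real.rpow_le_rpow_of_exponent_le (by norm_num)
    have := Nat.le_ceil ρ
    simp only [neg_le_neg_iff]
    exact this
  set Ap := fun x => max (A x) 0 with hApdef
  set Am := fun x => max (-A x) 0 with hAmdef
  have hAp : ∀ x, 0 ≤ Ap x := fun x => le_max_right _ _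
  have hAm : ∀ x, 0 ≤ Am x := fun x => le_max_right _ _
  have hbp : ∀ x ∈ Finset.Icc 1 (M ^ S), Ap x ≤ K := fun x hx =>
    le_trans (max_le (le_abs_self _) (abs_nonneg _)) (hKb x hx)
  have hbm : ∀ x ∈ Finset.Icc 1 (M ^ S), Am x ≤ K := fun x hx =>
    le_trans (max_le (neg_le_abs _) (abs_nonneg _)) (hKb x hx)
  have Hp := main_nonneg M S Ap hM hAp K ε θ R hK0 hε hθR hbp
  have Hm := main_nonneg M S Am hM hAm K ε θ R hK0 hε hθR hbm
  have hsplit := treemd_split M S A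
  have hIoc : Finset.Ioc 0 (M ^ S) = Finset.Icc 1 (M ^ S) := by
    ext x
    simp [Nat.lt_iff_add_one_le]
  have hTsum : (∑ x ∈ Finset.Ioc 0 (M ^ S), Ap x) + (∑ x ∈ Finset.Ioc 0 (M ^ S), Am x) = T := by
    rw [hIoc, hT, ← Finset.sum_add_distrib]
    apply Finset.sum_congr rfl
    intro x _
    show max (A x) 0 + max (-A x) 0 = |A x|
    rcases le_total (A x) 0 with h | h
    · rw [max_eq_right h, max_eq_left (by linarith), abs_of_nonpos h]
      ring
    · rw [max_eq_left h, max_eq_right (by linarith), abs_of_nonneg h]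
      ring
  have hTp0 : 0 ≤ ∑ x ∈ Finset.Ioc 0 (M ^ S), Ap x := Finset.sum_nonneg fun x _ => hAp x
  have hTm0 : 0 ≤ ∑ x ∈ Finset.Ioc 0 (M ^ S), Am x := Finset.sum_nonneg fun x _ => hAm x
  -- combine
  have hmain : treemd M S A ≤ 2 * ε * S * T + 4 * S * θ * K * (M:ℝ)^S + 6 * R * T / ε := by
    have h1 : 6 * R * (∑ x ∈ Finset.Ioc 0 (M ^ S), Ap x) / ε
        + 6 * R * (∑ x ∈ Finset.Ioc 0 (M ^ S), Am x) / ε = 6 * R * T / ε := by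
      rw [← hTsum]
      field_simp
    have h2 : 2 * ε * S * (∑ x ∈ Finset.Ioc 0 (M ^ S), Ap x)
        + 2 * ε * S * (∑ x ∈ Finset.Ioc 0 (M ^ S), Am x) = 2 * ε * S * T := by
      rw [← hTsum]
      ring
    linarith
  -- numeric conversions
  have e1 : 2 * ε * S * T = 2 * T * (S:ℝ) ^ ((51:ℝ)/100) := by
    have : ε * (S:ℝ) = (S:ℝ) ^ ((51:ℝ)/100) := by
      rw [hεdef]
      calc (S:ℝ) ^ (-(49:ℝ)/100) * (S:ℝ)
          = (S:ℝ) ^ (-(49:ℝ)/100) * (S:ℝ) ^ (1:ℝ) := by rw [Real.rpow_one]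
        _ = (S:ℝ) ^ (-(49:ℝ)/100 + 1) := (Real.rpow_add hSpos _ _).symm
        _ = (S:ℝ) ^ ((51:ℝ)/100) := by norm_num
    calc 2 * ε * S * T = 2 * T * (ε * S) := by ring
      _ = 2 * T * (S:ℝ) ^ ((51:ℝ)/100) := by rw [this]
  have e2 : 6 * R * T / ε ≤ 648 * T * (S:ℝ) ^ ((51:ℝ)/100) := by
    have hinv : 1 / ε = (S:ℝ) ^ ((49:ℝ)/100) := by
      rw [hεdef, one_div, ← Real.rpow_neg (le_of_lt hSpos)]
      norm_num
    have hR : (R:ℝ) ≤ 108 * (S:ℝ) ^ ((1:ℝ)/50) := Rbound S hS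
    have hcomb : (S:ℝ) ^ ((1:ℝ)/50) * (S:ℝ) ^ ((49:ℝ)/100) = (S:ℝ) ^ ((51:ℝ)/100) := by
      rw [← Real.rpow_add hSpos]
      norm_num
    have h49 : (0:ℝ) ≤ (S:ℝ) ^ ((49:ℝ)/100) := Real.rpow_nonneg (le_of_lt hSpos) _
    calc 6 * R * T / ε = 6 * T * ((R:ℝ) * (1/ε)) := by ring
      _ = 6 * T * ((R:ℝ) * (S:ℝ) ^ ((49:ℝ)/100)) := by rw [hinv]
      _ ≤ 6 * T * ((108 * (S:ℝ) ^ ((1:ℝ)/50)) * (S:ℝ) ^ ((49:ℝ)/100)) := by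
          apply mul_le_mul_of_nonneg_left _ (by linarith)
          exact mul_le_mul_of_nonneg_right hR h49
      _ = 648 * T * ((S:ℝ) ^ ((1:ℝ)/50) * (S:ℝ) ^ ((49:ℝ)/100)) := by ring
      _ = 648 * T * (S:ℝ) ^ ((51:ℝ)/100) := by rw [hcomb]
  have e3 : 4 * S * θ = (2:ℝ) ^ (-(S:ℝ) ^ ((3:ℝ)/200)) := by
    rw [hθdef, hρdef, neg_add, Real.rpow_add (by norm_num : (0:ℝ) < 2)]
    have h1 : (2:ℝ) ^ (-Real.logb 2 (4*S)) = 1 / (4*S) := by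
      rw [Real.rpow_neg (by norm_num), Real.rpow_logb (by norm_num) (by norm_num) (by positivity)]
      rw [one_div]
    rw [h1]
    field_simp
  have e3' : 4 * S * θ * K * (M:ℝ)^S = K * (M:ℝ)^S * (2:ℝ) ^ (-(S:ℝ) ^ ((3:ℝ)/200)) := by
    rw [← e3]
    ring
  have hpos2 : 0 ≤ K * (M:ℝ)^S * (2:ℝ) ^ (-(S:ℝ) ^ ((3:ℝ)/200)) := by
    apply mul_nonneg (mul_nonneg hK0 (by positivity))
    positivity
  have hpos1 : 0 ≤ T * (S:ℝ) ^ ((51:ℝ)/100) := by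
    apply mul_nonneg hT0
    positivity
  calc treemd M S A ≤ 2 * ε * S * T + 4 * S * θ * K * (M:ℝ)^S + 6 * R * T / ε := hmain
    _ ≤ 2 * T * (S:ℝ) ^ ((51:ℝ)/100) + K * (M:ℝ)^S * (2:ℝ) ^ (-(S:ℝ) ^ ((3:ℝ)/200))
        + 648 * T * (S:ℝ) ^ ((51:ℝ)/100) := by
        rw [e1, e3']
        linarith
    _ ≤ 1000 * (T * (S : ℝ) ^ ((51 : ℝ) / 100) +
        K * (M:ℝ) ^ S * (2 : ℝ) ^ (-(S : ℝ) ^ ((3 : ℝ) / 200))) := by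
        nlinarith

end Stmt2Aux

/-- There is an absolute constant `C > 0` such that for every even `M ≥ 2`,
every `S ≥ 1`, `n = M^S`, and every real sequence `A`,
`treemd_{M,S}(A) ≤ C·((∑_{x=1}^n |a_x|)·S^{51/100} + (max_x |a_x|)·n·2^{−S^{3/200}})`. -/
theorem stmt2 :
    ∃ C : ℝ, 0 < C ∧
      ∀ (M S : ℕ) (hM : 2 ≤ M) (_hE : Even M) (hS : 1 ≤ S) (A : ℕ → ℝ),
        treemd M S A ≤
          C * ((∑ x ∈ Finset.Icc 1 (M ^ S), |A x|) * (S : ℝ) ^ ((51 : ℝ) / 100) +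
            ((Finset.Icc 1 (M ^ S)).sup'
                (Finset.nonempty_Icc.mpr (Nat.one_le_pow S M (by omega)))
                fun x => |A x|) *
              (M ^ S : ℝ) * (2 : ℝ) ^ (-(S : ℝ) ^ ((3 : ℝ) / 200))) := by
  refine ⟨1000, by norm_num, ?_⟩
  intro M S hM _hE hS A
  have h1mem : (1:ℕ) ∈ Finset.Icc 1 (M ^ S) := by
    rw [Finset.mem_Icc]
    exact ⟨le_rfl, Nat.one_le_pow S M (by omega)⟩
  have hcast : ((M:ℝ)) ^ S = ((M ^ S : ℕ) : ℝ) := by push_cast; ring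
  have := Stmt2Aux.final M S hM hS A
    ((Finset.Icc 1 (M ^ S)).sup'
      (Finset.nonempty_Icc.mpr (Nat.one_le_pow S M (by omega))) fun x => |A x|)
    (fun x hx => Finset.le_sup' (f := fun x => |A x|) hx)
    (le_trans (abs_nonneg (A 1)) (Finset.le_sup' (f := fun x => |A x|) h1mem))
  exact this
end

section
/- Let S ≥ 1 be an integer and n = 2^S. Define the sequences A = (a_1, …, a_n) and B = (b_1, …, b_n) by a_x := 2^{ν(x−1)}, where ν(k) denotes the number of 1's in the binary representation of k, and b_x := 1 for all x. Then treerd_{2,S}(A, B) = n·S/3. In particular, the scaled tree total deviation can be as large as Ω(S·∑_x b_x), so an upper bound of the form O((∑_x b_x)·S^{51/100} + (max_x a_x)·n·2^{−S^{3/200}}) on treerd_{2,S}(A,B) fails without a lower-bound hypothesis on the ratios B_{Σ(l,r]}/A_{Σ(l,r]}. -/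
/-- Scaled total deviation `rd_M` of `A` by `B` on the scale-`s` interval `(l, l + M^s]`:
`(B_Σ/A_Σ)·md_M(A)` if `A_Σ ≠ 0`, and `0` otherwise. -/
noncomputable def rdAt (M s l : ℕ) (A B : ℕ → ℝ) : ℝ :=
  if iSum A l (l + M ^ s) = 0 then 0
  else (iSum B l (l + M ^ s) / iSum A l (l + M ^ s)) * mdAt M s l A

/-- Scaled tree total deviation `treerd_{M,S}(A,B)`: sum of `rd_M` over all recursion
intervals. -/
noncomputable def treerd (M S : ℕ) (A B : ℕ → ℝ) : ℝ :=
  ∑ s ∈ Finset.Icc 1 S, ∑ k ∈ Finset.range (M ^ (S - s)), rdAt M s (k * M ^ s) A B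

lemma nu_two_mul (k : ℕ) : ((Nat.digits 2 (2*k)).sum) = (Nat.digits 2 k).sum := by
  rcases Nat.eq_zero_or_pos k with h | h
  · simp [h]
  · rw [Nat.digits_def' (by norm_num) (by omega)]
    simp [Nat.mul_div_cancel_left, Nat.mul_mod_right]

lemma nu_two_mul_add_one (k : ℕ) :
    ((Nat.digits 2 (2*k+1)).sum) = (Nat.digits 2 k).sum + 1 := by
  rw [Nat.digits_def' (by norm_num) (by omega)]
  simp [Nat.mul_add_mod, Nat.mul_add_div]
  omega

lemma key : ∀ s k : ℕ,
    iSum (fun x => (2:ℝ) ^ ((Nat.digits 2 (x-1)).sum)) (k*2^s) (k*2^s + 2^s)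
      = 2 ^ ((Nat.digits 2 k).sum) * 3 ^ s := by
  intro s
  induction s with
  | zero =>
    intro k
    simp [iSum, Nat.Ioc_succ_singleton]
  | succ s ih =>
    intro k
    unfold iSum
    rw [← Finset.sum_Ioc_consecutive _ (Nat.le_add_right _ _)
      (show k*2^(s+1) + 2^s ≤ k*2^(s+1) + 2^(s+1) by
        have : 2^s ≤ 2^(s+1) := Nat.pow_le_pow_right (by norm_num) (by omega)
        omega)]
    have e1 : k*2^(s+1) = (2*k)*2^s := by ring
    have e2 : k*2^(s+1) + 2^s = (2*k)*2^s + 2^s := by ring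
    have e3 : k*2^(s+1) + 2^s = (2*k+1)*2^s := by ring
    have e4 : k*2^(s+1) + 2^(s+1) = (2*k+1)*2^s + 2^s := by ring
    have h1 := ih (2*k)
    have h2 := ih (2*k+1)
    unfold iSum at h1 h2
    rw [show (Finset.Ioc (k*2^(s+1)) (k*2^(s+1) + 2^s)) = Finset.Ioc ((2*k)*2^s) ((2*k)*2^s + 2^s) by rw [e2, e1],
        show (Finset.Ioc (k*2^(s+1) + 2^s) (k*2^(s+1) + 2^(s+1))) = Finset.Ioc ((2*k+1)*2^s) ((2*k+1)*2^s + 2^s) by rw [e3, e4],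
        h1, h2, nu_two_mul, nu_two_mul_add_one]
    ring

lemma iSum_one (l r : ℕ) (h : l ≤ r) : iSum (fun _ => (1:ℝ)) l r = (r - l : ℕ) := by
  simp [iSum, Nat.card_Ioc]

lemma rd_eval (s k : ℕ) :
    rdAt 2 (s+1) (k * 2^(s+1)) (fun x => (2:ℝ) ^ ((Nat.digits 2 (x-1)).sum)) (fun _ => 1)
      = 2^(s+1) / 3 := by
  have hA := key (s+1) k
  have hApos : (0:ℝ) < 2 ^ ((Nat.digits 2 k).sum) * 3 ^ (s+1) := by positivity
  rw [rdAt, if_neg (by rw [hA]; positivity)]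
  have hB : iSum (fun _ => (1:ℝ)) (k*2^(s+1)) (k*2^(s+1) + 2^(s+1)) = 2^(s+1) := by
    rw [iSum_one _ _ (Nat.le_add_right _ _), Nat.add_sub_cancel_left]
    push_cast
    ring
  have hmd : mdAt 2 (s+1) (k*2^(s+1)) (fun x => (2:ℝ) ^ ((Nat.digits 2 (x-1)).sum))
      = 2 ^ ((Nat.digits 2 k).sum) * 3 ^ s := by
    rw [mdAt]
    rw [Finset.sum_range_succ, Finset.sum_range_one]
    simp only [Nat.add_sub_cancel]
    have e1 : k*2^(s+1) + 0*2^s = (2*k)*2^s := by ring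
    have e2 : k*2^(s+1) + (0+1)*2^s = (2*k)*2^s + 2^s := by ring
    have e3 : k*2^(s+1) + 1*2^s = (2*k+1)*2^s := by ring
    have e4 : k*2^(s+1) + (1+1)*2^s = (2*k+1)*2^s + 2^s := by ring
    rw [show iSum (fun x => (2:ℝ) ^ ((Nat.digits 2 (x-1)).sum)) (k*2^(s+1) + 0*2^s) (k*2^(s+1) + (0+1)*2^s)
          = 2 ^ ((Nat.digits 2 (2*k)).sum) * 3 ^ s by rw [e1, e2]; exact key s (2*k),
        show iSum (fun x => (2:ℝ) ^ ((Nat.digits 2 (x-1)).sum)) (k*2^(s+1) + 1*2^s) (k*2^(s+1) + (1+1)*2^s)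
          = 2 ^ ((Nat.digits 2 (2*k+1)).sum) * 3 ^ s by rw [e3, e4]; exact key s (2*k+1),
        hA, nu_two_mul, nu_two_mul_add_one]
    rw [pow_succ (3:ℝ), pow_succ (2:ℝ)]
    rw [abs_of_nonpos (by nlinarith [pow_pos (show (0:ℝ)<2 by norm_num) ((Nat.digits 2 k).sum), pow_pos (show (0:ℝ)<3 by norm_num) s]),
        abs_of_nonneg (by nlinarith [pow_pos (show (0:ℝ)<2 by norm_num) ((Nat.digits 2 k).sum), pow_pos (show (0:ℝ)<3 by norm_num) s])]
    push_cast
    ring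
  rw [hA, hB, hmd]
  field_simp
  ring

/-- For `S ≥ 1`, `n = 2^S`, `a_x = 2^{ν(x−1)}` (where `ν(k)` is the number
of 1's in the binary representation of `k`, here `(Nat.digits 2 k).sum`), and `b_x = 1`,
the scaled tree total deviation satisfies `treerd_{2,S}(A,B) = n·S/3`. -/
theorem stmt5 (S : ℕ) (hS : 1 ≤ S) :
    treerd 2 S (fun x => (2 : ℝ) ^ ((Nat.digits 2 (x - 1)).sum)) (fun _ => 1) =
      (2 : ℝ) ^ S * S / 3 := by
  rw [treerd]
  have h : ∀ s ∈ Finset.Icc 1 S,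
      (∑ k ∈ Finset.range (2 ^ (S - s)),
        rdAt 2 s (k * 2 ^ s) (fun x => (2:ℝ) ^ ((Nat.digits 2 (x-1)).sum)) (fun _ => 1))
      = 2^S / 3 := by
    intro s hs
    simp only [Finset.mem_Icc] at hs
    obtain ⟨t, rfl⟩ : ∃ t, s = t + 1 := ⟨s - 1, by omega⟩
    rw [Finset.sum_congr rfl (fun k _ => rd_eval t k), Finset.sum_const, nsmul_eq_mul,
      Finset.card_range]
    push_cast
    rw [← mul_div_assoc, ← pow_add]
    congr 2
    omega
  rw [Finset.sum_congr rfl h, Finset.sum_const, nsmul_eq_mul, Nat.card_Icc]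
  simp
  ring
end

section
/- Let M ≥ 2 be an even integer, S ≥ 1 an integer, n = M^S, and let A = (a_1, …, a_n) be any real sequence. Then there exists a balanced sign family (γ_I)_I, indexed by the recursion intervals I, such that treemd_{M,S}(A) ≤ 2·∑_{x=1}^{n} a_x·g_x, where g_x := ∑_{s=1}^{S} g_{x,s}. -/
attribute [local instance] Classical.propDecidable

/-- Splitting a sum over `(l, l+N·w]` into `N` consecutive blocks of length `w`. -/
lemma sum_Ioc_blocks (f : ℕ → ℝ) (l w : ℕ) (N : ℕ) :
    ∑ i ∈ Finset.range N, ∑ x ∈ Finset.Ioc (l + i * w) (l + (i + 1) * w), f x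
      = ∑ x ∈ Finset.Ioc l (l + N * w), f x := by
  induction N with
  | zero => simp
  | succ N ih =>
    rw [Finset.sum_range_succ, ih,
      Finset.sum_Ioc_consecutive f (Nat.le_add_right l (N * w))
        (by gcongr <;> omega)]

/-- There is a "top half" subset of `{0,…,M−1}` of size `M/2` dominating its complement. -/
lemma exists_top_half (M : ℕ) (b : ℕ → ℝ) :
    ∃ T : Finset ℕ, T ⊆ Finset.range M ∧ T.card = M / 2 ∧
      ∀ i ∈ T, ∀ j ∈ Finset.range M \ T, b j ≤ b i := by
  have hne : ((Finset.range M).powersetCard (M / 2)).Nonempty := by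
    rw [Finset.powersetCard_nonempty, Finset.card_range]
    omega
  obtain ⟨T, hTmem, hmax⟩ :=
    Finset.exists_max_image _ (fun t => ∑ i ∈ t, b i) hne
  rw [Finset.mem_powersetCard] at hTmem
  obtain ⟨hsub, hcard⟩ := hTmem
  refine ⟨T, hsub, hcard, ?_⟩
  intro i hi j hj
  by_contra hlt
  push_neg at hlt
  rw [Finset.mem_sdiff] at hj
  have hji : j ∉ T := hj.2
  have hjT' : j ∉ T.erase i := fun h => hji (Finset.mem_of_mem_erase h)
  have hmem' : insert j (T.erase i) ∈ (Finset.range M).powersetCard (M / 2) := by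
    rw [Finset.mem_powersetCard]
    constructor
    · intro x hx
      rcases Finset.mem_insert.mp hx with h | h
      · exact h ▸ hj.1
      · exact hsub (Finset.mem_of_mem_erase h)
    · rw [Finset.card_insert_of_notMem hjT', Finset.card_erase_of_mem hi]
      have h1 : 1 ≤ T.card := Finset.card_pos.mpr ⟨i, hi⟩
      omega
  have hle := hmax _ hmem'
  rw [Finset.sum_insert hjT', Finset.sum_erase_eq_sub hi] at hle
  linarith

lemma half_ineq_aux (M : ℕ) (hM : 2 ≤ M) (hEven : Even M)
    (d : ℕ → ℝ) (T : Finset ℕ) (hsub : T ⊆ Finset.range M) (hcard : T.card = M / 2)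
    (hdom : ∀ i ∈ T, ∀ j ∈ Finset.range M \ T, d j ≤ d i)
    (hsum : ∑ i ∈ Finset.range M, d i = 0)
    (hpos : ∀ i ∈ T, 0 ≤ d i) :
    ∑ i ∈ Finset.range M, |d i| ≤
      2 * ∑ i ∈ Finset.range M, (if i ∈ T then (1:ℝ) else -1) * d i := by
  have hsplit : ∀ f : ℕ → ℝ, ∑ i ∈ Finset.range M \ T, f i + ∑ i ∈ T, f i
      = ∑ i ∈ Finset.range M, f i := fun f => Finset.sum_sdiff hsub
  have hTc : ∑ i ∈ Finset.range M \ T, d i = - ∑ i ∈ T, d i := by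
    have := hsplit d; linarith
  have hcardc : (Finset.range M \ T).card = M / 2 := by
    rw [Finset.card_sdiff_of_subset hsub, Finset.card_range, hcard]
    obtain ⟨m, hm⟩ := hEven; omega
  have hTne : T.Nonempty := Finset.card_pos.mp (by omega)
  obtain ⟨i₁, hi₁, hmin⟩ := Finset.exists_min_image T d hTne
  have h1 : ∑ j ∈ Finset.range M \ T, max (d j) 0 ≤ ∑ i ∈ T, d i := by
    calc ∑ j ∈ Finset.range M \ T, max (d j) 0
        ≤ ∑ _j ∈ Finset.range M \ T, d i₁ := by
          apply Finset.sum_le_sum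
          intro j hj
          exact max_le (hdom i₁ hi₁ j hj) (hpos i₁ hi₁)
      _ = (T.card : ℝ) * d i₁ := by
          rw [Finset.sum_const, hcardc, ← hcard, nsmul_eq_mul]
      _ ≤ ∑ i ∈ T, d i := by
          have := Finset.card_nsmul_le_sum T d (d i₁) (fun x hx => hmin x hx)
          simpa [nsmul_eq_mul] using this
  have habs : ∀ x : ℝ, |x| = 2 * max x 0 - x := by
    intro x; rcases le_or_gt 0 x with h | h
    · rw [abs_of_nonneg h, max_eq_left h]; ring
    · rw [abs_of_neg h, max_eq_right h.le]; ring
  have hTmax : ∑ i ∈ T, max (d i) 0 = ∑ i ∈ T, d i :=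
    Finset.sum_congr rfl fun i hi => max_eq_left (hpos i hi)
  have hγ : ∑ i ∈ Finset.range M, (if i ∈ T then (1:ℝ) else -1) * d i
      = 2 * ∑ i ∈ T, d i := by
    rw [← hsplit (fun i => (if i ∈ T then (1:ℝ) else -1) * d i)]
    have e1 : ∑ i ∈ Finset.range M \ T, (if i ∈ T then (1:ℝ) else -1) * d i
        = - ∑ i ∈ Finset.range M \ T, d i := by
      rw [← Finset.sum_neg_distrib]
      apply Finset.sum_congr rfl
      intro i hi
      rw [if_neg (Finset.mem_sdiff.mp hi).2]
      ring
    have e2 : ∑ i ∈ T, (if i ∈ T then (1:ℝ) else -1) * d i = ∑ i ∈ T, d i := by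
      apply Finset.sum_congr rfl; intro i hi; rw [if_pos hi, one_mul]
    rw [e1, e2, hTc]; ring
  calc ∑ i ∈ Finset.range M, |d i|
      = ∑ i ∈ Finset.range M, (2 * max (d i) 0 - d i) := by
        apply Finset.sum_congr rfl; intro i _; exact habs _
    _ = 2 * ∑ i ∈ Finset.range M, max (d i) 0 := by
        rw [Finset.sum_sub_distrib, hsum, Finset.mul_sum, sub_zero]
    _ = 2 * (∑ j ∈ Finset.range M \ T, max (d j) 0 + ∑ i ∈ T, d i) := by
        rw [← hTmax, hsplit (fun i => max (d i) 0)]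
    _ ≤ 2 * (∑ i ∈ T, d i + ∑ i ∈ T, d i) := by linarith
    _ = 2 * ∑ i ∈ Finset.range M, (if i ∈ T then (1:ℝ) else -1) * d i := by
        rw [hγ]; ring

lemma half_ineq (M : ℕ) (hM : 2 ≤ M) (hEven : Even M)
    (d : ℕ → ℝ) (T : Finset ℕ) (hsub : T ⊆ Finset.range M) (hcard : T.card = M / 2)
    (hdom : ∀ i ∈ T, ∀ j ∈ Finset.range M \ T, d j ≤ d i)
    (hsum : ∑ i ∈ Finset.range M, d i = 0) :
    ∑ i ∈ Finset.range M, |d i| ≤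
      2 * ∑ i ∈ Finset.range M, (if i ∈ T then (1:ℝ) else -1) * d i := by
  by_cases hpos : ∀ i ∈ T, 0 ≤ d i
  · exact half_ineq_aux M hM hEven d T hsub hcard hdom hsum hpos
  · push_neg at hpos
    obtain ⟨i₀, hi₀, hi₀neg⟩ := hpos
    set T' := Finset.range M \ T with hT'
    have hsub' : T' ⊆ Finset.range M := Finset.sdiff_subset
    have hcard' : T'.card = M / 2 := by
      rw [hT', Finset.card_sdiff_of_subset hsub, Finset.card_range, hcard]
      obtain ⟨m, hm⟩ := hEven; omega
    have hcompl : Finset.range M \ T' = T := by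
      rw [hT', Finset.sdiff_sdiff_self_left, Finset.inter_eq_right.mpr hsub]
    have hdom' : ∀ i ∈ T', ∀ j ∈ Finset.range M \ T', (fun i => -d i) j ≤ (fun i => -d i) i := by
      intro i hi j hj
      rw [hcompl] at hj
      simpa using neg_le_neg (hdom j hj i hi)
    have hsum' : ∑ i ∈ Finset.range M, (fun i => -d i) i = 0 := by
      simp only []
      rw [Finset.sum_neg_distrib, hsum, neg_zero]
    have hpos' : ∀ i ∈ T', 0 ≤ (fun i => -d i) i := by
      intro i hi
      have := hdom i₀ hi₀ i hi
      simp only []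
      linarith
    have key := half_ineq_aux M hM hEven (fun i => -d i) T' hsub' hcard' hdom' hsum' hpos'
    have hL : ∑ i ∈ Finset.range M, |(fun i => -d i) i| = ∑ i ∈ Finset.range M, |d i| := by
      apply Finset.sum_congr rfl; intro i _; simp
    have hR : ∑ i ∈ Finset.range M, (if i ∈ T' then (1:ℝ) else -1) * (fun i => -d i) i
        = ∑ i ∈ Finset.range M, (if i ∈ T then (1:ℝ) else -1) * d i := by
      apply Finset.sum_congr rfl
      intro i hi
      by_cases h : i ∈ T
      · have h2 : i ∉ T' := by rw [hT']; simp [h]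
        rw [if_neg h2, if_pos h]; ring
      · have h2 : i ∈ T' := by rw [hT', Finset.mem_sdiff]; exact ⟨hi, h⟩
        rw [if_pos h2, if_neg h]; ring
    rw [hL, hR] at key
    exact key

lemma mdAt_le (M s : ℕ) (hM : 2 ≤ M) (hEven : Even M) (hs : 1 ≤ s) (l : ℕ) (A : ℕ → ℝ)
    (T : Finset ℕ) (hsub : T ⊆ Finset.range M) (hcard : T.card = M / 2)
    (hdom : ∀ i ∈ T, ∀ j ∈ Finset.range M \ T,
      iSum A (l + j * M ^ (s - 1)) (l + (j + 1) * M ^ (s - 1)) ≤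
        iSum A (l + i * M ^ (s - 1)) (l + (i + 1) * M ^ (s - 1))) :
    mdAt M s l A ≤ 2 * ∑ i ∈ Finset.range M,
      (if i ∈ T then (1:ℝ) else -1) *
        iSum A (l + i * M ^ (s - 1)) (l + (i + 1) * M ^ (s - 1)) := by
  set μ : ℝ := (1 / (M : ℝ)) * iSum A l (l + M ^ s) with hμ
  set b : ℕ → ℝ := fun i => iSum A (l + i * M ^ (s - 1)) (l + (i + 1) * M ^ (s - 1)) with hb
  have hMs : M * M ^ (s - 1) = M ^ s := by
    conv_rhs => rw [show s = (s - 1) + 1 by omega]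
    rw [pow_succ']
  have hbsum : ∑ i ∈ Finset.range M, b i = iSum A l (l + M ^ s) := by
    simp only [hb, iSum]
    rw [sum_Ioc_blocks A l (M ^ (s - 1)) M, hMs]
  have hM0 : (M : ℝ) ≠ 0 := by positivity
  have hsum0 : ∑ i ∈ Finset.range M, (b i - μ) = 0 := by
    rw [Finset.sum_sub_distrib, hbsum, Finset.sum_const, Finset.card_range, nsmul_eq_mul, hμ]
    field_simp
    ring
  have hdom' : ∀ i ∈ T, ∀ j ∈ Finset.range M \ T, b j - μ ≤ b i - μ := by
    intro i hi j hj
    have := hdom i hi j hj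
    simp only [hb]
    linarith
  have key := half_ineq M hM hEven (fun i => b i - μ) T hsub hcard hdom' hsum0
  have hcardc : (Finset.range M \ T).card = M / 2 := by
    rw [Finset.card_sdiff_of_subset hsub, Finset.card_range, hcard]
    obtain ⟨m, hm⟩ := hEven; omega
  have hγ0 : ∑ i ∈ Finset.range M, (if i ∈ T then (1:ℝ) else -1) = 0 := by
    have h1 : ∑ i ∈ T, (if i ∈ T then (1:ℝ) else -1) = (T.card : ℝ) := by
      rw [Finset.sum_congr rfl (fun i hi => if_pos hi), Finset.sum_const, nsmul_eq_mul, mul_one]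
    have h2 : ∑ i ∈ Finset.range M \ T, (if i ∈ T then (1:ℝ) else -1)
        = -(((Finset.range M \ T).card : ℝ)) := by
      rw [Finset.sum_congr rfl (fun i hi => if_neg (Finset.mem_sdiff.mp hi).2),
        Finset.sum_const, nsmul_eq_mul, mul_neg_one]
    rw [← Finset.sum_sdiff hsub (f := fun i => (if i ∈ T then (1:ℝ) else -1)), h1, h2,
      hcard, hcardc]
    ring
  have hR : ∑ i ∈ Finset.range M, (if i ∈ T then (1:ℝ) else -1) * (b i - μ)
      = ∑ i ∈ Finset.range M, (if i ∈ T then (1:ℝ) else -1) * b i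
        - μ * ∑ i ∈ Finset.range M, (if i ∈ T then (1:ℝ) else -1) := by
    rw [Finset.mul_sum, ← Finset.sum_sub_distrib]
    apply Finset.sum_congr rfl; intro i _; ring
  rw [hR, hγ0, mul_zero, sub_zero] at key
  have hL : mdAt M s l A = ∑ i ∈ Finset.range M, |b i - μ| := rfl
  rw [hL]
  exact key

lemma idx_eq (M s k i x : ℕ) (hM : 2 ≤ M) (hs : 1 ≤ s) (hi : i < M)
    (hx1 : k * M ^ s + i * M ^ (s - 1) < x) (hx2 : x ≤ k * M ^ s + (i + 1) * M ^ (s - 1)) :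
    (x - 1) / M ^ s = k ∧ ((x - 1) / M ^ (s - 1)) % M = i := by
  have hMpos : 0 < M := by omega
  have hw : 0 < M ^ (s - 1) := Nat.pow_pos hMpos
  have hMs : M ^ s = M ^ (s - 1) * M := by
    conv_lhs => rw [show s = (s - 1) + 1 by omega]
    rw [pow_succ]
  set w := M ^ (s - 1) with hwdef
  set y := x - 1 with hy
  have hx0 : 0 < x := Nat.lt_of_le_of_lt (Nat.zero_le _) hx1
  have hyx : x = y + 1 := by omega
  have e1 : (k * M + i) * w = k * M ^ s + i * w := by rw [hMs]; ring
  have e2 : (k * M + i + 1) * w = k * M ^ s + (i + 1) * w := by rw [hMs]; ring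
  have hdiv : y / w = k * M + i := by
    apply Nat.div_eq_of_lt_le
    · rw [e1]; linarith [hx1, hyx]
    · rw [e2]
      have : y + 1 ≤ k * M ^ s + (i + 1) * w := by rw [← hyx]; exact hx2
      linarith
  constructor
  · rw [hMs, ← Nat.div_div_eq_div_mul, hdiv, show k * M + i = M * k + i by ring,
      Nat.mul_add_div hMpos, Nat.div_eq_of_lt hi, add_zero]
  · rw [hdiv, show k * M + i = M * k + i by ring, Nat.mul_add_mod, Nat.mod_eq_of_lt hi]

lemma reindex (M S s : ℕ) (hM : 2 ≤ M) (hs1 : 1 ≤ s) (hsS : s ≤ S) (A : ℕ → ℝ)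
    (g : ℕ → ℕ → ℝ) :
    ∑ k ∈ Finset.range (M ^ (S - s)), ∑ i ∈ Finset.range M,
        g k i * iSum A (k * M ^ s + i * M ^ (s - 1)) (k * M ^ s + (i + 1) * M ^ (s - 1))
      = ∑ x ∈ Finset.Icc 1 (M ^ S),
          A x * g ((x - 1) / M ^ s) (((x - 1) / M ^ (s - 1)) % M) := by
  have hIcc : Finset.Icc 1 (M ^ S) = Finset.Ioc 0 (M ^ S) := by
    ext x; simp [Nat.lt_iff_add_one_le]
  have hMS : M ^ (S - s) * M ^ s = M ^ S := by
    rw [← pow_add]; congr 1; omega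
  have hMs : M * M ^ (s - 1) = M ^ s := by
    conv_rhs => rw [show s = (s - 1) + 1 by omega]
    rw [pow_succ']
  rw [hIcc]
  have h1 := sum_Ioc_blocks
    (fun x => A x * g ((x - 1) / M ^ s) (((x - 1) / M ^ (s - 1)) % M)) 0 (M ^ s) (M ^ (S - s))
  simp only [zero_add] at h1
  rw [hMS] at h1
  rw [← h1]
  apply Finset.sum_congr rfl
  intro k hk
  have h2 := sum_Ioc_blocks
    (fun x => A x * g ((x - 1) / M ^ s) (((x - 1) / M ^ (s - 1)) % M))
    (k * M ^ s) (M ^ (s - 1)) M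
  rw [hMs] at h2
  rw [show (k + 1) * M ^ s = k * M ^ s + M ^ s by ring, ← h2]
  apply Finset.sum_congr rfl
  intro i hi
  rw [iSum, Finset.mul_sum]
  apply Finset.sum_congr rfl
  intro x hx
  rw [Finset.mem_Ioc] at hx
  obtain ⟨e1, e2⟩ := idx_eq M s k i x hM hs1 (Finset.mem_range.mp hi) hx.1 hx.2
  rw [e1, e2]
  ring

/-- For even `M ≥ 2`, `S ≥ 1`, `n = M^S`, and any real sequence `A`, there
is a balanced sign family: a choice `γ s k : {0,…,M−1} → {−1,+1}` for every scale
`s ∈ {1,…,S}` and every scale-`s` interval `(k·M^s, (k+1)·M^s]` (with exactly `M/2`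
coordinates equal to `+1`), such that `treemd_{M,S}(A) ≤ 2·∑_{x=1}^{n} a_x·g_x`, where
`g_x = ∑_{s=1}^{S} g_{x,s}` and `g_{x,s} = γ s ((x−1)/M^s) (((x−1)/M^{s−1}) mod M)` is the
sign assigned to the sub-interval containing `x` by the scale-`s` interval containing `x`. -/
theorem stmt10 (M S : ℕ) (hM : 2 ≤ M) (hEven : Even M) (hS : 1 ≤ S) (A : ℕ → ℝ) :
    ∃ γ : ℕ → ℕ → ℕ → ℝ,
      (∀ s ∈ Finset.Icc 1 S, ∀ k ∈ Finset.range (M ^ (S - s)),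
        (∀ i ∈ Finset.range M, γ s k i = 1 ∨ γ s k i = -1) ∧
          ((Finset.range M).filter fun i => γ s k i = 1).card = M / 2) ∧
      treemd M S A ≤
        2 * ∑ x ∈ Finset.Icc 1 (M ^ S),
          A x * ∑ s ∈ Finset.Icc 1 S,
            γ s ((x - 1) / M ^ s) (((x - 1) / M ^ (s - 1)) % M) := by
  have hb := fun (s k : ℕ) => exists_top_half M (fun i =>
    iSum A (k * M ^ s + i * M ^ (s - 1)) (k * M ^ s + (i + 1) * M ^ (s - 1)))
  choose T hsub hcard hdom using hb
  refine ⟨fun s k i => if i ∈ T s k then 1 else -1, ?_, ?_⟩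
  · intro s hs k hk
    constructor
    · intro i _
      by_cases h : i ∈ T s k
      · left; simp [h]
      · right; simp [h]
    · have hfilter : ((Finset.range M).filter fun i =>
          (if i ∈ T s k then (1:ℝ) else -1) = 1) = T s k := by
        ext i
        simp only [Finset.mem_filter]
        constructor
        · rintro ⟨hr, hv⟩
          by_contra h
          rw [if_neg h] at hv
          norm_num at hv
        · intro h
          exact ⟨hsub s k h, if_pos h⟩
      rw [hfilter, hcard]
  · show treemd M S A ≤ 2 * ∑ x ∈ Finset.Icc 1 (M ^ S),
      A x * ∑ s ∈ Finset.Icc 1 S,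
        (if (((x - 1) / M ^ (s - 1)) % M) ∈ T s ((x - 1) / M ^ s) then (1:ℝ) else -1)
    unfold treemd
    calc ∑ s ∈ Finset.Icc 1 S, ∑ k ∈ Finset.range (M ^ (S - s)), mdAt M s (k * M ^ s) A
        ≤ ∑ s ∈ Finset.Icc 1 S, ∑ k ∈ Finset.range (M ^ (S - s)),
            2 * ∑ i ∈ Finset.range M, (if i ∈ T s k then (1:ℝ) else -1) *
              iSum A (k * M ^ s + i * M ^ (s - 1)) (k * M ^ s + (i + 1) * M ^ (s - 1)) := by
          apply Finset.sum_le_sum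
          intro s hs
          apply Finset.sum_le_sum
          intro k hk
          exact mdAt_le M s hM hEven (Finset.mem_Icc.mp hs).1 (k * M ^ s) A (T s k)
            (hsub s k) (hcard s k) (hdom s k)
      _ = 2 * ∑ s ∈ Finset.Icc 1 S, ∑ x ∈ Finset.Icc 1 (M ^ S),
            A x * (if (((x - 1) / M ^ (s - 1)) % M) ∈ T s ((x - 1) / M ^ s)
              then (1:ℝ) else -1) := by
          rw [Finset.mul_sum]
          apply Finset.sum_congr rfl
          intro s hs
          rw [← Finset.mul_sum]
          congr 1
          exact reindex M S s hM (Finset.mem_Icc.mp hs).1 (Finset.mem_Icc.mp hs).2 A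
            (fun k i => if i ∈ T s k then (1:ℝ) else -1)
      _ = 2 * ∑ x ∈ Finset.Icc 1 (M ^ S),
            A x * ∑ s ∈ Finset.Icc 1 S,
              (if (((x - 1) / M ^ (s - 1)) % M) ∈ T s ((x - 1) / M ^ s)
                then (1:ℝ) else -1) := by
          congr 1
          rw [Finset.sum_comm]
          apply Finset.sum_congr rfl
          intro x _
          rw [Finset.mul_sum]
end

section
/- Let M ≥ 2 be an even integer, S ≥ 1 an integer, and n = M^S. For every balanced sign family (γ_I)_I and every sign pattern σ ∈ {−1, +1}^S, the number of indices x ∈ {1, …, n} such that g_{x,s} = σ_s for all s ∈ {1, …, S} is exactly (M/2)^S. In particular, for a uniformly random index x, the random variables g_{x,1}, …, g_{x,S} are independent and each is uniform on {−1, +1}. -/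
attribute [local instance] Classical.propDecidable

private lemma balanced_count (M : ℕ) (hEven : Even M)
    (f : ℕ → ℝ) (hf : ∀ i ∈ Finset.range M, f i = 1 ∨ f i = -1)
    (hcard : ((Finset.range M).filter fun i => f i = 1).card = M / 2)
    (t : ℝ) (ht : t = 1 ∨ t = -1) :
    ((Finset.range M).filter fun i => f i = t).card = M / 2 := by
  rcases ht with h | h
  · rw [h]; exact hcard
  · rw [h]
    have heq : (Finset.range M).filter (fun i => f i = -1)
        = (Finset.range M) \ ((Finset.range M).filter fun i => f i = 1) := by
      ext i
      simp only [Finset.mem_filter, Finset.mem_sdiff]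
      constructor
      · rintro ⟨hi, hfi⟩
        refine ⟨hi, fun h' => ?_⟩
        rw [hfi] at h'
        norm_num at h'
      · rintro ⟨hi, hfi⟩
        rcases hf i hi with h1 | h1
        · exact absurd ⟨hi, h1⟩ hfi
        · exact ⟨hi, h1⟩
    rw [heq, Finset.card_sdiff, Finset.inter_eq_left.mpr (Finset.filter_subset _ _), hcard, Finset.card_range]
    obtain ⟨r, hr⟩ := hEven
    omega

private lemma aux_count (M : ℕ) (hM : 2 ≤ M) (hEven : Even M) :
    ∀ (S : ℕ) (γ : ℕ → ℕ → ℕ → ℝ),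
      (∀ s ∈ Finset.Icc 1 S, ∀ k ∈ Finset.range (M ^ (S - s)),
        (∀ i ∈ Finset.range M, γ s k i = 1 ∨ γ s k i = -1) ∧
          ((Finset.range M).filter fun i => γ s k i = 1).card = M / 2) →
      ∀ (σ : ℕ → ℝ), (∀ s ∈ Finset.Icc 1 S, σ s = 1 ∨ σ s = -1) →
    ((Finset.range (M ^ S)).filter fun y =>
        ∀ s ∈ Finset.Icc 1 S, γ s (y / M ^ s) ((y / M ^ (s - 1)) % M) = σ s).card
      = (M / 2) ^ S := by
  intro S
  induction S with
  | zero => intro γ hγ σ hσ; simp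
  | succ S ih =>
    intro γ hγ σ hσ
    have hMpos : 0 < M := by omega
    have hn : 0 < M ^ S := pow_pos hMpos S
    set P : ℕ → Prop := fun y =>
      ∀ s ∈ Finset.Icc 1 (S + 1), γ s (y / M ^ s) ((y / M ^ (s - 1)) % M) = σ s with hP
    -- fiberwise count by top digit
    have h1 : ((Finset.range (M ^ (S + 1))).filter P).card
        = ∑ d ∈ Finset.range M,
            (((Finset.range (M ^ (S + 1))).filter P).filter fun y => y / M ^ S = d).card := by
      apply Finset.card_eq_sum_card_fiberwise
      intro y hy
      simp only [Finset.mem_coe, Finset.mem_filter, Finset.mem_range] at hy ⊢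
      have : y < M ^ S * M := by rw [← pow_succ]; exact hy.1
      exact Nat.div_lt_of_lt_mul (by omega)
    -- each fiber
    have h2 : ∀ d ∈ Finset.range M,
        (((Finset.range (M ^ (S + 1))).filter P).filter fun y => y / M ^ S = d).card
          = ((Finset.range (M ^ S)).filter fun r => P (d * M ^ S + r)).card := by
      intro d hd
      simp only [Finset.mem_range] at hd
      apply Finset.card_nbij' (i := fun y => y % M ^ S) (j := fun r => d * M ^ S + r)
      · intro y hy
        simp only [Finset.mem_coe, Finset.mem_filter, Finset.mem_range] at hy ⊢
        obtain ⟨⟨hylt, hPy⟩, hyd⟩ := hy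
        have hmod : y % M ^ S < M ^ S := Nat.mod_lt _ hn
        have hdm : d * M ^ S + y % M ^ S = y := by
          conv_rhs => rw [← Nat.div_add_mod y (M ^ S)]
          rw [hyd, Nat.mul_comm]
        exact ⟨hmod, by rw [hdm]; exact hPy⟩
      · intro r hr
        simp only [Finset.mem_coe, Finset.mem_filter, Finset.mem_range] at hr ⊢
        obtain ⟨hrlt, hPr⟩ := hr
        have hlt : d * M ^ S + r < M ^ (S + 1) := by
          have : (d + 1) * M ^ S ≤ M * M ^ S := Nat.mul_le_mul_right _ (by omega)
          rw [pow_succ]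
          have h0 : d * M ^ S + r < (d + 1) * M ^ S := by rw [add_mul, one_mul]; omega
          have h1 : M * M ^ S = M ^ S * M := Nat.mul_comm _ _
          omega
        have hdiv : (d * M ^ S + r) / M ^ S = d := by
          rw [Nat.mul_comm d, Nat.mul_add_div hn, Nat.div_eq_of_lt hrlt, Nat.add_zero]
        exact ⟨⟨hlt, hPr⟩, hdiv⟩
      · intro y hy
        simp only [Finset.mem_coe, Finset.mem_filter, Finset.mem_range] at hy
        obtain ⟨⟨hylt, hPy⟩, hyd⟩ := hy
        conv_rhs => rw [← Nat.div_add_mod y (M ^ S)]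
        rw [hyd, Nat.mul_comm]
      · intro r hr
        simp only [Finset.mem_coe, Finset.mem_filter, Finset.mem_range] at hr
        dsimp only
        rw [Nat.mul_comm d, Nat.mul_add_mod, Nat.mod_eq_of_lt hr.1]
    -- helper arithmetic
    have e0 : ∀ (d r : ℕ), r < M ^ S → ∀ u ≤ S,
        (d * M ^ S + r) / M ^ u = d * M ^ (S - u) + r / M ^ u := by
      intro d r hr u hu
      have hMS : M ^ S = M ^ u * M ^ (S - u) := by rw [← pow_add]; congr 1; omega
      rw [hMS, ← Nat.mul_assoc, Nat.mul_comm d (M ^ u), Nat.mul_assoc,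
        Nat.mul_add_div (pow_pos hMpos u)]
    have e2g : ∀ (d r : ℕ), r < M ^ S → ∀ s, 1 ≤ s → s ≤ S →
        ((d * M ^ S + r) / M ^ (s - 1)) % M = (r / M ^ (s - 1)) % M := by
      intro d r hr s hs1 hs2
      rw [e0 d r hr (s - 1) (by omega)]
      have h : d * M ^ (S - (s - 1)) = M * (d * M ^ (S - s)) := by
        have he : M ^ (S - (s - 1)) = M * M ^ (S - s) := by
          rw [← pow_succ']; congr 1; omega
        rw [he]; ring
      rw [h, Nat.mul_add_mod]
    -- decompose the predicate on d * M^S + r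
    have hdecomp : ∀ d < M, ∀ r < M ^ S,
        P (d * M ^ S + r) ↔ (γ (S + 1) 0 d = σ (S + 1) ∧
          ∀ s ∈ Finset.Icc 1 S,
            γ s (d * M ^ (S - s) + r / M ^ s) ((r / M ^ (s - 1)) % M) = σ s) := by
      intro d hd r hr
      have hlt : d * M ^ S + r < M ^ (S + 1) := by
        rw [pow_succ]
        have h1 : d * M ^ S + r < (d + 1) * M ^ S := by rw [add_mul, one_mul]; omega
        have h2 : (d + 1) * M ^ S ≤ M * M ^ S := Nat.mul_le_mul_right _ (by omega)
        have h3 : M * M ^ S = M ^ S * M := Nat.mul_comm _ _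
        omega
      have hdiv : (d * M ^ S + r) / M ^ (S + 1 - 1) = d := by
        simp only [Nat.add_sub_cancel]
        rw [Nat.mul_comm d, Nat.mul_add_div hn, Nat.div_eq_of_lt hr, Nat.add_zero]
      constructor
      · intro hPy
        constructor
        · have := hPy (S + 1) (by simp)
          rw [Nat.div_eq_of_lt hlt, hdiv, Nat.mod_eq_of_lt hd] at this
          exact this
        · intro s hs
          simp only [Finset.mem_Icc] at hs
          have := hPy s (by simp only [Finset.mem_Icc]; omega)
          rw [e0 d r hr s hs.2, e2g d r hr s hs.1 hs.2] at this
          exact this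
      · rintro ⟨htop, hrest⟩
        intro s hs
        simp only [Finset.mem_Icc] at hs
        rcases Nat.lt_or_ge s (S + 1) with hlt' | hge
        · rw [e0 d r hr s (by omega), e2g d r hr s hs.1 (by omega)]
          exact hrest s (by simp only [Finset.mem_Icc]; omega)
        · have hsq : s = S + 1 := by omega
          subst hsq
          rw [Nat.div_eq_of_lt hlt, hdiv, Nat.mod_eq_of_lt hd]
          exact htop
    -- inner count via ih
    have h3 : ∀ d < M,
        ((Finset.range (M ^ S)).filter fun r => P (d * M ^ S + r)).card
          = if γ (S + 1) 0 d = σ (S + 1) then (M / 2) ^ S else 0 := by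
      intro d hd
      by_cases hcond : γ (S + 1) 0 d = σ (S + 1)
      · rw [if_pos hcond]
        have : ((Finset.range (M ^ S)).filter fun r => P (d * M ^ S + r))
            = ((Finset.range (M ^ S)).filter fun r =>
                ∀ s ∈ Finset.Icc 1 S,
                  (fun s k i => γ s (d * M ^ (S - s) + k) i) s (r / M ^ s)
                    ((r / M ^ (s - 1)) % M) = σ s) := by
          ext r
          simp only [Finset.mem_filter, Finset.mem_range]
          refine and_congr_right fun hr => ?_
          rw [hdecomp d hd r hr]
          simp [hcond]
        rw [this]
        refine ih (fun s k i => γ s (d * M ^ (S - s) + k) i) ?_ σ ?_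
        · intro s hs k hk
          simp only [Finset.mem_Icc] at hs
          simp only [Finset.mem_range] at hk
          have hks : d * M ^ (S - s) + k < M ^ (S + 1 - s) := by
            have h1 : d * M ^ (S - s) + k < (d + 1) * M ^ (S - s) := by
              rw [add_mul, one_mul]; omega
            have h2 : (d + 1) * M ^ (S - s) ≤ M * M ^ (S - s) :=
              Nat.mul_le_mul_right _ (by omega)
            have h3 : M * M ^ (S - s) = M ^ (S + 1 - s) := by
              rw [← pow_succ']; congr 1; omega
            omega
          exact hγ s (by simp only [Finset.mem_Icc]; omega) _
            (by simp only [Finset.mem_range]; exact hks)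
        · intro s hs
          simp only [Finset.mem_Icc] at hs
          exact hσ s (by simp only [Finset.mem_Icc]; omega)
      · rw [if_neg hcond]
        rw [Finset.card_eq_zero, Finset.filter_eq_empty_iff]
        intro r hr
        simp only [Finset.mem_range] at hr
        rw [hdecomp d hd r hr]
        tauto
    -- combine
    have hcardeq : ((Finset.range (M ^ (S + 1))).filter P).card = (M / 2) ^ (S + 1) := by
      rw [h1]
      rw [Finset.sum_congr rfl (fun d hd => by
        rw [h2 d hd, h3 d (Finset.mem_range.mp hd)])]
      rw [← Finset.sum_filter, Finset.sum_const, smul_eq_mul]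
      have hbal := hγ (S + 1) (by simp) 0 (by simp)
      rw [balanced_count M hEven _ hbal.1 hbal.2 _ (hσ (S + 1) (by simp))]
      rw [pow_succ]
      ring
    convert hcardeq using 3

/-- For even `M ≥ 2`, `S ≥ 1`, `n = M^S`: for every balanced sign family
`γ` (assigning to each scale-`s` interval, `s ∈ {1,…,S}`, a vector in `{−1,+1}^M` with
exactly `M/2` coordinates `+1`) and every sign pattern `σ ∈ {−1,+1}^S`, the number of indices
`x ∈ {1,…,n}` with `g_{x,s} = σ_s` for all `s ∈ {1,…,S}` is exactly `(M/2)^S`. Here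
`g_{x,s} = γ s ((x−1)/M^s) (((x−1)/M^{s−1}) mod M)` is the sign the scale-`s` interval
containing `x` assigns to the sub-interval containing `x`. -/
theorem stmt11 (M S : ℕ) (hM : 2 ≤ M) (hEven : Even M) (hS : 1 ≤ S)
    (γ : ℕ → ℕ → ℕ → ℝ)
    (hγ : ∀ s ∈ Finset.Icc 1 S, ∀ k ∈ Finset.range (M ^ (S - s)),
      (∀ i ∈ Finset.range M, γ s k i = 1 ∨ γ s k i = -1) ∧
        ((Finset.range M).filter fun i => γ s k i = 1).card = M / 2)
    (σ : ℕ → ℝ) (hσ : ∀ s ∈ Finset.Icc 1 S, σ s = 1 ∨ σ s = -1) :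
    ((Finset.Icc 1 (M ^ S)).filter fun x =>
        ∀ s ∈ Finset.Icc 1 S,
          γ s ((x - 1) / M ^ s) (((x - 1) / M ^ (s - 1)) % M) = σ s).card =
      (M / 2) ^ S := by
  rw [← aux_count M hM hEven S γ hγ σ hσ]
  apply Finset.card_nbij' (i := fun x => x - 1) (j := fun y => y + 1)
  · intro x hx
    simp only [Finset.mem_coe, Finset.mem_filter, Finset.mem_Icc, Finset.mem_range] at hx ⊢
    exact ⟨by omega, hx.2⟩
  · intro y hy
    simp only [Finset.mem_coe, Finset.mem_filter, Finset.mem_Icc, Finset.mem_range] at hy ⊢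
    refine ⟨by omega, ?_⟩
    simpa using hy.2
  · intro x hx
    simp only [Finset.mem_coe, Finset.mem_filter, Finset.mem_Icc] at hx
    dsimp only
    omega
  · intro y _
    simp
end
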